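/- arXiv:2010.03133 — 9 statements merged into one kernel-verified Lean document; each statement's English description precedes it below -/
import Mathlib

section
/- (Backward recursion, Theorem 2 part 2.) For every t with 1 ≤ t ≤ T−1 and all (o_t,b_t) ∈ O×B, the unnormalized backward messages satisfy B'_t(o_t,b_t) = Σ_{o_{t+1}∈O} Σ_{b_{t+1}∈B} h(o_t,s_{t+1},a_{t+1},o_{t+1},b_{t+1})·B'_{t+1}(o_{t+1},b_{t+1}). Consequently, there exists a constant c_t > 0 such that the normalized backward messages satisfy β_t(o_t,b_t) = c_t · Σ_{o_{t+1}∈O} Σ_{b_{t+1}∈B} h(o_t,s_{t+1},a_{t+1},o_{t+1},b_{t+1})·β_{t+1}(o_{t+1},b_{t+1}) for all (o_t,b_t). -/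
open Finset

/-- The combined high-level policy `π̄_hi(o'|s,o,b)` of the options-with-failure
framework with failure parameter `ζ`. -/
noncomputable def pibarHi {S O : Type*} [Fintype O] [DecidableEq O]
    (pihi : O → S → ℝ) (ζ : ℝ) (o' : O) (s : S) (o : O) (b : Bool) : ℝ :=
  if b then pihi o' s
  else if o' = o then 1 - ζ + ζ / (Fintype.card O : ℝ)
  else ζ / (Fintype.card O : ℝ)

/-- The one-step factor `h(o⁻,s,a,o,b) = π_b(b|s,o⁻)·π̄_hi(o|s,o⁻,b)·π_lo(a|s,o)`. -/
noncomputable def hFac {S A O : Type*} [Fintype O] [DecidableEq O]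
    (pib : Bool → S → O → ℝ) (pihi : O → S → ℝ) (pilo : A → S → O → ℝ) (ζ : ℝ)
    (om : O) (s : S) (a : A) (o : O) (b : Bool) : ℝ :=
  pib b s om * pibarHi pihi ζ o s om b * pilo a s o

/-- Extension of a tuple `f : Fin n → α` to `ℕ`, by a default value. -/
def ext {α : Type*} (n : ℕ) (f : Fin n → α) (dflt : α) (u : ℕ) : α :=
  if h : u < n then f ⟨u, h⟩ else dflt

/-- The unnormalized backward message
`B'_t(o_t,b_t) = Σ_{o_{t+1},…,o_T} Σ_{b_{t+1},…,b_T} ∏_{u=t+1}^{T} h(o_{u−1},s_u,a_u,o_u,b_u)`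
(so `B'_T ≡ 1`); the path sums are encoded by `op i = o_{t+1+i}` and
`bp i = b_{t+1+i}` for `i < T − t`, together with the fixed value `o_t = ot`. -/
noncomputable def bwdRaw {S A O : Type*} [Fintype O] [DecidableEq O]
    (pib : Bool → S → O → ℝ) (pihi : O → S → ℝ) (pilo : A → S → O → ℝ) (ζ : ℝ)
    (s : ℕ → S) (a : ℕ → A)
    (T t : ℕ) (ot : O) (bt : Bool) : ℝ :=
  ∑ op : Fin (T - t) → O, ∑ bp : Fin (T - t) → Bool,
    ∏ u ∈ Finset.Icc (t + 1) T,
      hFac pib pihi pilo ζ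
        (if u - 1 = t then ot else ext (T - t) op ot (u - t - 2))
        (s u) (a u)
        (ext (T - t) op ot (u - t - 1))
        (ext (T - t) bp bt (u - t - 1))

/-- The normalized backward message `β_t = B'_t / Σ_{(o,b)} B'_t(o,b)`. -/
noncomputable def bwdNorm {S A O : Type*} [Fintype O] [DecidableEq O]
    (pib : Bool → S → O → ℝ) (pihi : O → S → ℝ) (pilo : A → S → O → ℝ) (ζ : ℝ)
    (s : ℕ → S) (a : ℕ → A)
    (T t : ℕ) (ot : O) (bt : Bool) : ℝ :=
  bwdRaw pib pihi pilo ζ s a T t ot bt /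
    ∑ p : O × Bool, bwdRaw pib pihi pilo ζ s a T t p.1 p.2
lemma ext_eq_of_lt {α : Type*} (n : ℕ) (f : Fin n → α) (d : α) (k : ℕ) (h : k < n) :
    ext n f d k = f ⟨k, h⟩ := dif_pos h

lemma consCast_zero {α : Type*} {n m : ℕ} (h : n = m + 1) (x : α) (p : Fin m → α)
    (v : ℕ) (hv : v < n) (hv0 : v = 0) :
    (Fin.cons x p : Fin (m + 1) → α) (Fin.cast h ⟨v, hv⟩) = x := by
  subst hv0
  have : Fin.cast h ⟨0, hv⟩ = 0 := by apply Fin.ext; simp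
  rw [this, Fin.cons_zero]

lemma consCast_pos {α : Type*} {n m : ℕ} (h : n = m + 1) (x : α) (p : Fin m → α)
    (v w : ℕ) (hv : v < n) (hw : w < m) (hvw : v = w + 1) :
    (Fin.cons x p : Fin (m + 1) → α) (Fin.cast h ⟨v, hv⟩) = p ⟨w, hw⟩ := by
  subst hvw
  have : Fin.cast h ⟨w + 1, hv⟩ = Fin.succ ⟨w, hw⟩ := by apply Fin.ext; simp
  rw [this, Fin.cons_succ]

lemma sum_cons_split {α : Type*} [Fintype α] {n m : ℕ} (h : n = m + 1)
    (f : (Fin n → α) → ℝ) :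
    ∑ g : Fin n → α, f g =
      ∑ x : α, ∑ p : Fin m → α, f (fun i => (Fin.cons x p : Fin (m + 1) → α) (Fin.cast h i)) := by
  rw [← Equiv.sum_comp ((Fin.consEquiv (fun _ : Fin (m + 1) => α)).trans
      (Equiv.arrowCongr (finCongr h.symm) (Equiv.refl α))) f, Fintype.sum_prod_type]
  rfl
lemma bwdRaw_succ {S A O : Type*} [Fintype O] [DecidableEq O]
    (pib : Bool → S → O → ℝ) (pihi : O → S → ℝ) (pilo : A → S → O → ℝ) (ζ : ℝ)
    (s : ℕ → S) (a : ℕ → A) (T t : ℕ) (htT : t + 1 ≤ T) (ot : O) (bt : Bool) :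
    bwdRaw pib pihi pilo ζ s a T t ot bt =
      ∑ op : O, ∑ bp : Bool,
        hFac pib pihi pilo ζ ot (s (t + 1)) (a (t + 1)) op bp *
          bwdRaw pib pihi pilo ζ s a T (t + 1) op bp := by
  unfold bwdRaw
  set m := T - (t + 1) with hmdef
  have hTt : T - t = m + 1 := by omega
  have hsplit : Finset.Icc (t + 1) T = insert (t + 1) (Finset.Icc (t + 1 + 1) T) := by
    rw [show Finset.Icc (t + 1 + 1) T = Finset.Ioc (t + 1) T from Finset.Icc_add_one_left_eq_Ioc _ _,
        Finset.Ioc_insert_left htT]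
  rw [sum_cons_split hTt]
  refine Finset.sum_congr rfl fun o' _ => ?_
  rw [Finset.sum_comm, sum_cons_split hTt]
  refine Finset.sum_congr rfl fun b' _ => ?_
  rw [Finset.mul_sum, Finset.sum_comm]
  refine Finset.sum_congr rfl fun op' _ => ?_
  rw [Finset.mul_sum]
  refine Finset.sum_congr rfl fun bp' _ => ?_
  rw [hsplit, Finset.prod_insert (by simp)]
  congr 1
  · -- factor at u = t+1
    rw [if_pos (show t + 1 - 1 = t by omega),
        ext_eq_of_lt _ _ _ _ (show t + 1 - t - 1 < T - t by omega),
        ext_eq_of_lt _ _ _ _ (show t + 1 - t - 1 < T - t by omega)]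
    rw [consCast_zero hTt o' op' _ _ (by omega), consCast_zero hTt b' bp' _ _ (by omega)]
  · refine Finset.prod_congr rfl fun u hu => ?_
    obtain ⟨hu1, hu2⟩ := Finset.mem_Icc.mp hu
    have e_o : ext (T - t) (fun i => (Fin.cons o' op' : Fin (m + 1) → O) (Fin.cast hTt i)) ot
        (u - t - 1) = ext m op' o' (u - (t + 1) - 1) := by
      rw [ext_eq_of_lt _ _ _ _ (show u - t - 1 < T - t by omega),
          ext_eq_of_lt _ _ _ _ (show u - (t + 1) - 1 < m by omega)]
      exact consCast_pos hTt o' op' _ _ _ _ (by omega)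
    have e_b : ext (T - t) (fun i => (Fin.cons b' bp' : Fin (m + 1) → Bool) (Fin.cast hTt i)) bt
        (u - t - 1) = ext m bp' b' (u - (t + 1) - 1) := by
      rw [ext_eq_of_lt _ _ _ _ (show u - t - 1 < T - t by omega),
          ext_eq_of_lt _ _ _ _ (show u - (t + 1) - 1 < m by omega)]
      exact consCast_pos hTt b' bp' _ _ _ _ (by omega)
    have e_om : (if u - 1 = t then ot else
        ext (T - t) (fun i => (Fin.cons o' op' : Fin (m + 1) → O) (Fin.cast hTt i)) ot
          (u - t - 2)) =
        (if u - 1 = t + 1 then o' else ext m op' o' (u - (t + 1) - 2)) := by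
      by_cases h2 : u = t + 1 + 1
      · subst h2
        rw [if_neg (by omega), if_pos (by omega),
            ext_eq_of_lt _ _ _ _ (show t + 1 + 1 - t - 2 < T - t by omega)]
        exact consCast_zero hTt o' op' _ _ (by omega)
      · rw [if_neg (by omega), if_neg (by omega),
            ext_eq_of_lt _ _ _ _ (show u - t - 2 < T - t by omega),
            ext_eq_of_lt _ _ _ _ (show u - (t + 1) - 2 < m by omega)]
        exact consCast_pos hTt o' op' _ _ _ _ (by omega)
    rw [e_om, e_o, e_b]
lemma hFac_pos {S A O : Type*} [Fintype O] [Nonempty O] [DecidableEq O]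
    (pib : Bool → S → O → ℝ) (pihi : O → S → ℝ) (pilo : A → S → O → ℝ)
    (hpib_pos : ∀ b s o, 0 < pib b s o) (hpihi_pos : ∀ o s, 0 < pihi o s)
    (hpilo_pos : ∀ a s o, 0 < pilo a s o) (ζ : ℝ) (hζ : ζ ∈ Set.Ioo (0 : ℝ) 1)
    (om : O) (s : S) (a : A) (o : O) (b : Bool) :
    0 < hFac pib pihi pilo ζ om s a o b := by
  have hcard : (0 : ℝ) < (Fintype.card O : ℝ) := by
    exact_mod_cast Fintype.card_pos
  have hdiv : 0 < ζ / (Fintype.card O : ℝ) := div_pos hζ.1 hcard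
  have hbar : 0 < pibarHi pihi ζ o s om b := by
    unfold pibarHi
    split
    · exact hpihi_pos o s
    · split
      · have := hζ.2; linarith
      · exact hdiv
  exact mul_pos (mul_pos (hpib_pos b s om) hbar) (hpilo_pos a s o)

lemma bwdRaw_pos {S A O : Type*} [Fintype O] [Nonempty O] [DecidableEq O]
    (pib : Bool → S → O → ℝ) (pihi : O → S → ℝ) (pilo : A → S → O → ℝ)
    (hpib_pos : ∀ b s o, 0 < pib b s o) (hpihi_pos : ∀ o s, 0 < pihi o s)
    (hpilo_pos : ∀ a s o, 0 < pilo a s o) (ζ : ℝ) (hζ : ζ ∈ Set.Ioo (0 : ℝ) 1)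
    (s : ℕ → S) (a : ℕ → A) (T t : ℕ) (ot : O) (bt : Bool) :
    0 < bwdRaw pib pihi pilo ζ s a T t ot bt := by
  unfold bwdRaw
  refine Finset.sum_pos (fun op _ => Finset.sum_pos (fun bp _ => Finset.prod_pos
    (fun u _ => hFac_pos pib pihi pilo hpib_pos hpihi_pos hpilo_pos ζ hζ _ _ _ _ _))
    Finset.univ_nonempty) Finset.univ_nonempty
/-- **Backward recursion (Theorem 2, part 2).** -/
theorem backward_recursion {S A O : Type*}
    [Fintype S] [Fintype A] [Fintype O]
    [Nonempty S] [Nonempty A] [Nonempty O] [DecidableEq O]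
    (pib : Bool → S → O → ℝ) (pihi : O → S → ℝ) (pilo : A → S → O → ℝ)
    (hpib_pos : ∀ b s o, 0 < pib b s o) (hpib_sum : ∀ s o, ∑ b, pib b s o = 1)
    (hpihi_pos : ∀ o s, 0 < pihi o s) (hpihi_sum : ∀ s, ∑ o, pihi o s = 1)
    (hpilo_pos : ∀ a s o, 0 < pilo a s o) (hpilo_sum : ∀ s o, ∑ a, pilo a s o = 1)
    (ζ : ℝ) (hζ : ζ ∈ Set.Ioo (0 : ℝ) 1)
    (T : ℕ) (hT : 2 ≤ T)
    (s : ℕ → S) (a : ℕ → A) :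
    ∀ t, 1 ≤ t → t ≤ T - 1 →
      (∀ (ot : O) (bt : Bool),
        bwdRaw pib pihi pilo ζ s a T t ot bt =
          ∑ op : O, ∑ bp : Bool,
            hFac pib pihi pilo ζ ot (s (t + 1)) (a (t + 1)) op bp *
              bwdRaw pib pihi pilo ζ s a T (t + 1) op bp) ∧
      ∃ c : ℝ, 0 < c ∧ ∀ (ot : O) (bt : Bool),
        bwdNorm pib pihi pilo ζ s a T t ot bt =
          c * ∑ op : O, ∑ bp : Bool,
            hFac pib pihi pilo ζ ot (s (t + 1)) (a (t + 1)) op bp *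
              bwdNorm pib pihi pilo ζ s a T (t + 1) op bp := by
  intro t ht1 ht2
  have htT : t + 1 ≤ T := by omega
  refine ⟨fun ot bt => bwdRaw_succ pib pihi pilo ζ s a T t htT ot bt, ?_⟩
  set Z1 := ∑ p : O × Bool, bwdRaw pib pihi pilo ζ s a T t p.1 p.2 with hZ1def
  set Z2 := ∑ p : O × Bool, bwdRaw pib pihi pilo ζ s a T (t + 1) p.1 p.2 with hZ2def
  have hZ1 : 0 < Z1 := Finset.sum_pos (fun p _ =>
    bwdRaw_pos pib pihi pilo hpib_pos hpihi_pos hpilo_pos ζ hζ s a T t p.1 p.2)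
    Finset.univ_nonempty
  have hZ2 : 0 < Z2 := Finset.sum_pos (fun p _ =>
    bwdRaw_pos pib pihi pilo hpib_pos hpihi_pos hpilo_pos ζ hζ s a T (t + 1) p.1 p.2)
    Finset.univ_nonempty
  refine ⟨Z2 / Z1, div_pos hZ2 hZ1, fun ot bt => ?_⟩
  unfold bwdNorm
  rw [← hZ1def, ← hZ2def, bwdRaw_succ pib pihi pilo ζ s a T t htT ot bt]
  have hsum : ∀ op : O, ∑ bp : Bool,
      hFac pib pihi pilo ζ ot (s (t + 1)) (a (t + 1)) op bp *
        (bwdRaw pib pihi pilo ζ s a T (t + 1) op bp / Z2) =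
      (∑ bp : Bool, hFac pib pihi pilo ζ ot (s (t + 1)) (a (t + 1)) op bp *
        bwdRaw pib pihi pilo ζ s a T (t + 1) op bp) / Z2 := by
    intro op
    rw [Finset.sum_div]
    exact Finset.sum_congr rfl fun bp _ => (mul_div_assoc _ _ _).symm
  simp only [hsum]
  rw [← Finset.sum_div]
  field_simp
end

section
/- (Two-step smoothing factorization, Theorem 2 part 4.) For every t with 2 ≤ t ≤ T and all (o_{t−1},b_t) ∈ O×B, γ̃'_t(o_{t−1},b_t) = (∏_{u=t−1}^{T−1} P(s_{u+1}|s_u,a_u)) · π_b(b_t|s_t,o_{t−1}) · [Σ_{o_t∈O} π̄_hi(o_t|s_t,o_{t−1},b_t)·π_lo(a_t|s_t,o_t)·B'_t(o_t,b_t)] · [Σ_{b_{t−1}∈B} α'_{t−1}(o_{t−1},b_{t−1})]. Consequently, there exists a constant c_t > 0 such that the normalized two-step smoothing distribution satisfies γ̃_t(o_{t−1},b_t) = c_t · π_b(b_t|s_t,o_{t−1}) · [Σ_{o_t∈O} π̄_hi(o_t|s_t,o_{t−1},b_t)·π_lo(a_t|s_t,o_t)·β_t(o_t,b_t)] · [Σ_{b_{t−1}∈B}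 α_{t−1}(o_{t−1},b_{t−1})] for all (o_{t−1},b_t). -/
open Finset

/-- The unnormalized forward message `α'_t` (path-sum definition, with
`op i = o_{i+1}`, `bp i = b_{i+1}` for `i < t − 1` and fixed endpoint
`o_t = ot`, `b_t = bt`). -/
noncomputable def fwdRaw {S A O : Type*} [Fintype O] [DecidableEq O]
    (pib : Bool → S → O → ℝ) (pihi : O → S → ℝ) (pilo : A → S → O → ℝ) (ζ : ℝ)
    (P : S → S → A → ℝ) (μ : O → ℝ) (s : ℕ → S) (a : ℕ → A)
    (t : ℕ) (ot : O) (bt : Bool) : ℝ :=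
  ∑ o0 : O, ∑ op : Fin (t - 1) → O, ∑ bp : Fin (t - 1) → Bool,
    μ o0 *
    (∏ u ∈ Finset.Icc 1 t,
      hFac pib pihi pilo ζ
        (if u - 1 = 0 then o0 else ext (t - 1) op ot (u - 2))
        (s u) (a u)
        (ext (t - 1) op ot (u - 1))
        (ext (t - 1) bp bt (u - 1))) *
    (∏ u ∈ Finset.Icc 1 (t - 1), P (s (u + 1)) (s u) (a u))

/-- The normalized forward message `α_t = α'_t / Σ_{(o,b)} α'_t(o,b)`. -/
noncomputable def fwdNorm {S A O : Type*} [Fintype O] [DecidableEq O]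
    (pib : Bool → S → O → ℝ) (pihi : O → S → ℝ) (pilo : A → S → O → ℝ) (ζ : ℝ)
    (P : S → S → A → ℝ) (μ : O → ℝ) (s : ℕ → S) (a : ℕ → A)
    (t : ℕ) (ot : O) (bt : Bool) : ℝ :=
  fwdRaw pib pihi pilo ζ P μ s a t ot bt /
    ∑ p : O × Bool, fwdRaw pib pihi pilo ζ P μ s a t p.1 p.2

/-- The unnormalized two-step smoothing distribution `γ̃'_t`: the sum over `o_0`
(with weight `μ`), over all `o_u` for `u ∈ [1:T]`, `u ≠ t − 1`, and over all
`b_u` for `u ∈ [1:T]`, `u ≠ t` (with `o_{t−1} = om` and `b_t = bt` fixed) of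
`∏_{u=1}^{T} h(o_{u−1},s_u,a_u,o_u,b_u) · ∏_{u=1}^{T−1} P(s_{u+1}|s_u,a_u)`.
The free path variables are encoded by `opre i = o_{i+1}` for `i < t − 2`,
`opost i = o_{t+i}` for `i < T − t + 1`, `bpre i = b_{i+1}` for `i < t − 1`,
and `bpost i = b_{t+1+i}` for `i < T − t`. -/
noncomputable def twoStepRaw {S A O : Type*} [Fintype O] [DecidableEq O]
    (pib : Bool → S → O → ℝ) (pihi : O → S → ℝ) (pilo : A → S → O → ℝ) (ζ : ℝ)
    (P : S → S → A → ℝ) (μ : O → ℝ) (s : ℕ → S) (a : ℕ → A)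
    (T t : ℕ) (om : O) (bt : Bool) : ℝ :=
  ∑ o0 : O, ∑ opre : Fin (t - 2) → O, ∑ bpre : Fin (t - 1) → Bool,
  ∑ opost : Fin (T - t + 1) → O, ∑ bpost : Fin (T - t) → Bool,
    (fun (oful : ℕ → O) (bful : ℕ → Bool) =>
      μ o0 *
      (∏ u ∈ Finset.Icc 1 T,
        hFac pib pihi pilo ζ (oful (u - 1)) (s u) (a u) (oful u) (bful u)) *
      (∏ u ∈ Finset.Icc 1 (T - 1), P (s (u + 1)) (s u) (a u)))
    (fun v => if v = 0 then o0
      else if v ≤ t - 1 then ext (t - 2) opre om (v - 1)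
      else ext (T - t + 1) opost om (v - t))
    (fun v => if v ≤ t then ext (t - 1) bpre bt (v - 1)
      else ext (T - t) bpost bt (v - t - 1))

/-- The normalized two-step smoothing distribution
`γ̃_t = γ̃'_t / Σ_{(o,b)} γ̃'_t(o,b)`. -/
noncomputable def twoStepNorm {S A O : Type*} [Fintype O] [DecidableEq O]
    (pib : Bool → S → O → ℝ) (pihi : O → S → ℝ) (pilo : A → S → O → ℝ) (ζ : ℝ)
    (P : S → S → A → ℝ) (μ : O → ℝ) (s : ℕ → S) (a : ℕ → A)
    (T t : ℕ) (om : O) (bt : Bool) : ℝ :=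
  twoStepRaw pib pihi pilo ζ P μ s a T t om bt /
    ∑ p : O × Bool, twoStepRaw pib pihi pilo ζ P μ s a T t p.1 p.2

lemma sum_fin_arrow_congr {α : Type*} [Fintype α] {M : Type*} [AddCommMonoid M]
    {k k' : ℕ} (h : k = k') (f : (Fin k → α) → M) :
    ∑ x : Fin k → α, f x = ∑ x : Fin k' → α, f (fun i => x (Fin.cast h i)) := by
  subst h; rfl

lemma ext_precast {α : Type*} {k k' : ℕ} (h : k = k') (x : Fin k' → α) (d : α) (u : ℕ) :
    ext k (fun i => x (Fin.cast h i)) d u = ext k' x d u := by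
  subst h; rfl

lemma fwdRaw_succ {S A O : Type*} [Fintype O] [DecidableEq O]
    (pib : Bool → S → O → ℝ) (pihi : O → S → ℝ) (pilo : A → S → O → ℝ) (ζ : ℝ)
    (P : S → S → A → ℝ) (μ : O → ℝ) (s : ℕ → S) (a : ℕ → A)
    (n : ℕ) (om : O) (bm : Bool) :
    fwdRaw pib pihi pilo ζ P μ s a (n+1) om bm =
      ∑ o0 : O, ∑ op : Fin n → O, ∑ bp : Fin n → Bool,
        μ o0 *
        (∏ u ∈ Finset.Icc 1 (n+1),
          hFac pib pihi pilo ζ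
            (if u - 1 = 0 then o0 else ext n op om (u - 2))
            (s u) (a u)
            (ext n op om (u - 1))
            (ext n bp bm (u - 1))) *
        (∏ u ∈ Finset.Icc 1 n, P (s (u + 1)) (s u) (a u)) := by
  rw [fwdRaw]
  refine Finset.sum_congr rfl fun o0 _ => ?_
  rw [sum_fin_arrow_congr (show n+1-1 = n by omega)]
  refine Finset.sum_congr rfl fun op _ => ?_
  rw [sum_fin_arrow_congr (show n+1-1 = n by omega)]
  refine Finset.sum_congr rfl fun bp _ => ?_
  simp only [ext_precast, show n+1-1 = n from rfl]

lemma bwdRaw_clean {S A O : Type*} [Fintype O] [DecidableEq O]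
    (pib : Bool → S → O → ℝ) (pihi : O → S → ℝ) (pilo : A → S → O → ℝ) (ζ : ℝ)
    (s : ℕ → S) (a : ℕ → A)
    (n m : ℕ) (ot : O) (bt : Bool) :
    bwdRaw pib pihi pilo ζ s a (n+2+m) (n+2) ot bt =
      ∑ op : Fin m → O, ∑ bp : Fin m → Bool,
        ∏ u ∈ Finset.Icc (n+2+1) (n+2+m),
          hFac pib pihi pilo ζ
            (if u - 1 = n+2 then ot else ext m op ot (u - (n+2) - 2))
            (s u) (a u)
            (ext m op ot (u - (n+2) - 1))
            (ext m bp bt (u - (n+2) - 1)) := by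
  rw [bwdRaw]
  rw [sum_fin_arrow_congr (show n+2+m-(n+2) = m by omega)]
  refine Finset.sum_congr rfl fun op _ => ?_
  rw [sum_fin_arrow_congr (show n+2+m-(n+2) = m by omega)]
  refine Finset.sum_congr rfl fun bp _ => ?_
  simp only [ext_precast]

lemma ext_lt {α : Type*} {n u : ℕ} (f : Fin n → α) (d : α) (h : u < n) :
    ext n f d u = f ⟨u, h⟩ := dif_pos h

lemma ext_ge {α : Type*} {n u : ℕ} (f : Fin n → α) (d : α) (h : n ≤ u) :
    ext n f d u = d := dif_neg (by omega)

lemma ext_snoc_of_le {α : Type*} {n u : ℕ} (f : Fin n → α) (x d : α) (h : u ≤ n) :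
    ext (n+1) (Fin.snoc f x) d u = ext n f x u := by
  rcases lt_or_eq_of_le h with h' | rfl
  · rw [ext_lt _ _ (by omega : u < n+1), ext_lt f x h']
    exact Fin.snoc_castSucc (α := fun _ => α) x f ⟨u, h'⟩
  · rw [ext_lt _ _ (by omega : u < u+1), ext_ge f x le_rfl]
    exact Fin.snoc_last (α := fun _ => α) x f

lemma ext_cons_succ {α : Type*} {m v : ℕ} (x : α) (f : Fin m → α) (d : α) :
    ext (m+1) (Fin.cons x f) d (v+1) = ext m f d v := by
  by_cases h : v < m
  · rw [ext_lt _ _ (by omega : v+1 < m+1), ext_lt f d h]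
    exact Fin.cons_succ (α := fun _ => α) x f ⟨v, h⟩
  · rw [ext_ge _ _ (by omega), ext_ge f d (by omega)]

lemma ext_cons_zero {α : Type*} {m : ℕ} (x : α) (f : Fin m → α) (d : α) :
    ext (m+1) (Fin.cons x f) d 0 = x := by
  rw [ext_lt _ _ (Nat.succ_pos m)]; exact Fin.cons_zero (α := fun _ => α) x f

lemma sum_factor {ι₁ ι₂ ι₃ ι₄ ι₅ ι₆ ι₇ : Type*}
    [Fintype ι₁] [Fintype ι₂] [Fintype ι₃] [Fintype ι₄] [Fintype ι₅] [Fintype ι₆] [Fintype ι₇]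
    (F : ι₁ → ι₂ → ι₃ → ι₄ → ℝ) (K1 K2 : ι₅ → ℝ) (H : ι₅ → ι₆ → ι₇ → ℝ) (c d : ℝ) :
    (∑ x1 : ι₁, ∑ x2 : ι₂, ∑ x3 : ι₃, ∑ x4 : ι₄, ∑ x5 : ι₅, ∑ x6 : ι₆, ∑ x7 : ι₇,
        F x1 x2 x3 x4 * ((d * K1 x5 * K2 x5 * c) * H x5 x6 x7))
      = c * d * (∑ x5 : ι₅, K1 x5 * K2 x5 * (∑ x6 : ι₆, ∑ x7 : ι₇, H x5 x6 x7)) *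
        (∑ x3 : ι₃, ∑ x1 : ι₁, ∑ x2 : ι₂, ∑ x4 : ι₄, F x1 x2 x3 x4) := by
  have hswap : (∑ x1 : ι₁, ∑ x2 : ι₂, ∑ x3 : ι₃, ∑ x4 : ι₄, F x1 x2 x3 x4)
      = ∑ x3 : ι₃, ∑ x1 : ι₁, ∑ x2 : ι₂, ∑ x4 : ι₄, F x1 x2 x3 x4 := by
    calc (∑ x1 : ι₁, ∑ x2 : ι₂, ∑ x3 : ι₃, ∑ x4 : ι₄, F x1 x2 x3 x4)
        = ∑ x1 : ι₁, ∑ x3 : ι₃, ∑ x2 : ι₂, ∑ x4 : ι₄, F x1 x2 x3 x4 :=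
          Finset.sum_congr rfl fun x1 _ => Finset.sum_comm
      _ = ∑ x3 : ι₃, ∑ x1 : ι₁, ∑ x2 : ι₂, ∑ x4 : ι₄, F x1 x2 x3 x4 := Finset.sum_comm
  have step : ∀ x1 x2 x3 x4, (∑ x5 : ι₅, ∑ x6 : ι₆, ∑ x7 : ι₇,
        F x1 x2 x3 x4 * ((d * K1 x5 * K2 x5 * c) * H x5 x6 x7))
      = F x1 x2 x3 x4 * (c * d * ∑ x5 : ι₅, K1 x5 * K2 x5 * (∑ x6 : ι₆, ∑ x7 : ι₇, H x5 x6 x7)) := by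
    intro x1 x2 x3 x4
    simp only [← Finset.mul_sum]
    congr 1
    conv_rhs => rw [Finset.mul_sum]
    exact Finset.sum_congr rfl fun x5 _ => by ring
  simp only [step]
  simp only [← Finset.sum_mul]
  rw [hswap]; ring

lemma ext_cons' {α : Type*} {m v : ℕ} (x : α) (f : Fin m → α) (d : α) :
    ext (m+1) (Fin.cons x f) d v = if v = 0 then x else ext m f d (v - 1) := by
  cases v with
  | zero => rw [if_pos rfl]; exact ext_cons_zero x f d
  | succ v => rw [if_neg (by omega), ext_cons_succ]; rfl

lemma twoStepRaw_factor {S A O : Type*} [Fintype O] [DecidableEq O]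
    (pib : Bool → S → O → ℝ) (pihi : O → S → ℝ) (pilo : A → S → O → ℝ) (ζ : ℝ)
    (P : S → S → A → ℝ) (μ : O → ℝ) (s : ℕ → S) (a : ℕ → A)
    (n m : ℕ) (om : O) (bt : Bool) :
    twoStepRaw pib pihi pilo ζ P μ s a (n+2+m) (n+2) om bt =
      (∏ u ∈ Finset.Icc (n+1) (n+1+m), P (s (u+1)) (s u) (a u)) *
        pib bt (s (n+2)) om *
        (∑ ot : O, pibarHi pihi ζ ot (s (n+2)) om bt * pilo (a (n+2)) (s (n+2)) ot *
          bwdRaw pib pihi pilo ζ s a (n+2+m) (n+2) ot bt) *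
        (∑ bm : Bool, fwdRaw pib pihi pilo ζ P μ s a (n+1) om bm) := by
  have step1 : twoStepRaw pib pihi pilo ζ P μ s a (n+2+m) (n+2) om bt =
      ∑ o0 : O, ∑ opre : Fin n → O, ∑ bm : Bool, ∑ bp : Fin n → Bool,
      ∑ ot : O, ∑ op' : Fin m → O, ∑ bpost : Fin m → Bool,
        (μ o0 *
          (∏ u ∈ Finset.Icc 1 (n+1),
            hFac pib pihi pilo ζ
              (if u - 1 = 0 then o0 else ext n opre om (u - 2))
              (s u) (a u)
              (ext n opre om (u - 1))
              (ext n bp bm (u - 1))) *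
          (∏ u ∈ Finset.Icc 1 n, P (s (u + 1)) (s u) (a u))) *
        ((pib bt (s (n+2)) om * pibarHi pihi ζ ot (s (n+2)) om bt *
            pilo (a (n+2)) (s (n+2)) ot *
            (∏ u ∈ Finset.Icc (n+1) (n+1+m), P (s (u + 1)) (s u) (a u))) *
          (∏ u ∈ Finset.Icc (n+2+1) (n+2+m),
            hFac pib pihi pilo ζ
              (if u - 1 = n+2 then ot else ext m op' ot (u - (n+2) - 2))
              (s u) (a u)
              (ext m op' ot (u - (n+2) - 1))
              (ext m bpost bt (u - (n+2) - 1)))) := by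
    rw [twoStepRaw]
    refine Finset.sum_congr rfl fun o0 _ => ?_
    rw [sum_fin_arrow_congr (show n+2-2 = n by omega)]
    refine Finset.sum_congr rfl fun opre _ => ?_
    rw [sum_fin_arrow_congr (show n+2-1 = n+1 by omega)]
    rw [← Equiv.sum_comp (Fin.snocEquiv (fun _ : Fin (n+1) => Bool))]
    rw [Fintype.sum_prod_type]
    refine Finset.sum_congr rfl fun bm _ => ?_
    refine Finset.sum_congr rfl fun bp _ => ?_
    rw [sum_fin_arrow_congr (show n+2+m-(n+2)+1 = m+1 by omega)]
    rw [← Equiv.sum_comp (Fin.consEquiv (fun _ : Fin (m+1) => O))]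
    rw [Fintype.sum_prod_type]
    refine Finset.sum_congr rfl fun ot _ => ?_
    refine Finset.sum_congr rfl fun op' _ => ?_
    rw [sum_fin_arrow_congr (show n+2+m-(n+2) = m by omega)]
    refine Finset.sum_congr rfl fun bpost _ => ?_
    simp only [Fin.snocEquiv_apply, Fin.consEquiv_apply, ext_precast,
      show n+2-1 = n+1 from rfl, show n+2+m-1 = n+1+m from by omega]
    -- split the h-product at u = n+2 and the P-product at u = n
    rw [show Finset.Icc 1 (n+2+m) = Finset.Ioc 0 (n+2+m) from by ext x; simp only [Finset.mem_Icc, Finset.mem_Ioc, Finset.mem_singleton]; omega]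
    rw [← Finset.prod_Ioc_consecutive _ (show 0 ≤ n+1 by omega) (show n+1 ≤ n+2+m by omega)]
    rw [← Finset.prod_Ioc_consecutive _ (show n+1 ≤ n+2 by omega) (show n+2 ≤ n+2+m by omega)]
    rw [show Finset.Ioc (n+1) (n+2) = {n+2} from by ext x; simp only [Finset.mem_Icc, Finset.mem_Ioc, Finset.mem_singleton]; omega]
    rw [Finset.prod_singleton]
    rw [show Finset.Ioc 0 (n+1) = Finset.Icc 1 (n+1) from by ext x; simp only [Finset.mem_Icc, Finset.mem_Ioc, Finset.mem_singleton]; omega]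
    rw [show Finset.Ioc (n+2) (n+2+m) = Finset.Icc (n+2+1) (n+2+m) from by ext x; simp only [Finset.mem_Icc, Finset.mem_Ioc, Finset.mem_singleton]; omega]
    rw [show Finset.Icc 1 (n+1+m) = Finset.Ioc 0 (n+1+m) from by ext x; simp only [Finset.mem_Icc, Finset.mem_Ioc, Finset.mem_singleton]; omega]
    rw [← Finset.prod_Ioc_consecutive _ (show 0 ≤ n by omega) (show n ≤ n+1+m by omega)]
    rw [show Finset.Ioc 0 n = Finset.Icc 1 n from by ext x; simp only [Finset.mem_Icc, Finset.mem_Ioc, Finset.mem_singleton]; omega]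
    rw [show Finset.Ioc n (n+1+m) = Finset.Icc (n+1) (n+1+m) from by ext x; simp only [Finset.mem_Icc, Finset.mem_Ioc, Finset.mem_singleton]; omega]
    rw [show ∀ x a1 a2 a3 b1 b2 : ℝ, x * (a1 * (a2 * a3)) * (b1 * b2)
        = (x * a1 * b1) * ((a2 * b2) * a3) from fun _ _ _ _ _ _ => by ring]
    refine congrArg₂ (· * ·) (congrArg₂ (· * ·) (congrArg₂ (· * ·) rfl ?_) rfl)
      (congrArg₂ (· * ·) (congrArg₂ (· * ·) ?_ rfl) ?_)
    · -- block 1 : u ∈ [1, n+1]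
      refine Finset.prod_congr rfl fun u hu => ?_
      simp only [Finset.mem_Icc] at hu
      by_cases h0 : u - 1 = 0
      · rw [if_pos h0, if_pos h0, if_neg (show ¬u = 0 by omega),
          if_pos (show u ≤ n+1 by omega), if_pos (show u ≤ n+2 by omega),
          ext_snoc_of_le bp bm bt (show u-1 ≤ n by omega)]
      · rw [if_neg h0, if_neg h0, if_pos (show u-1 ≤ n+1 by omega),
          show u-1-1 = u-2 by omega, if_neg (show ¬u = 0 by omega),
          if_pos (show u ≤ n+1 by omega), if_pos (show u ≤ n+2 by omega),
          ext_snoc_of_le bp bm bt (show u-1 ≤ n by omega)]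
    · -- middle factor : u = n+2
      rw [if_neg (show ¬(n+2-1 = 0) by omega), if_pos (show n+2-1 ≤ n+1 by omega),
        ext_ge opre om (show n ≤ n+2-1-1 by omega),
        if_neg (show ¬(n+2 = 0) by omega), if_neg (show ¬(n+2 ≤ n+1) by omega),
        show n+2-(n+2) = 0 by omega, ext_cons_zero ot op' om,
        if_pos (show n+2 ≤ n+2 by omega), ext_ge (Fin.snoc bp bm) bt (show n+1 ≤ n+2-1 by omega)]
      rfl
    · -- block 3 : u ∈ [n+3, n+2+m]
      refine Finset.prod_congr rfl fun u hu => ?_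
      simp only [Finset.mem_Icc] at hu
      rw [if_neg (show ¬(u-1 = 0) by omega), if_neg (show ¬(u-1 ≤ n+1) by omega),
        if_neg (show ¬(u = 0) by omega), if_neg (show ¬(u ≤ n+1) by omega),
        if_neg (show ¬(u ≤ n+2) by omega), ext_cons', ext_cons',
        if_neg (show ¬(u - (n+2) = 0) by omega),
        ext_lt op' om (show u-(n+2)-1 < m by omega),
        ext_lt op' ot (show u-(n+2)-1 < m by omega)]
      by_cases h : u - 1 = n + 2
      · rw [if_pos (show u-1-(n+2) = 0 by omega), if_pos h]
      · rw [if_neg (show ¬(u-1-(n+2) = 0) by omega), if_neg h,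
          show u-1-(n+2)-1 = u-(n+2)-2 by omega,
          ext_lt op' om (show u-(n+2)-2 < m by omega),
          ext_lt op' ot (show u-(n+2)-2 < m by omega)]
  rw [step1]
  simp only [bwdRaw_clean pib pihi pilo ζ s a n m,
    fwdRaw_succ pib pihi pilo ζ P μ s a n om]
  exact sum_factor _ _ _ _ _ _

/-- **Two-step smoothing factorization (Theorem 2, part 4).** -/
theorem two_step_smoothing_factorization {S A O : Type*}
    [Fintype S] [Fintype A] [Fintype O]
    [Nonempty S] [Nonempty A] [Nonempty O] [DecidableEq O]
    (pib : Bool → S → O → ℝ) (pihi : O → S → ℝ) (pilo : A → S → O → ℝ)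
    (hpib_pos : ∀ b s o, 0 < pib b s o) (hpib_sum : ∀ s o, ∑ b, pib b s o = 1)
    (hpihi_pos : ∀ o s, 0 < pihi o s) (hpihi_sum : ∀ s, ∑ o, pihi o s = 1)
    (hpilo_pos : ∀ a s o, 0 < pilo a s o) (hpilo_sum : ∀ s o, ∑ a, pilo a s o = 1)
    (ζ : ℝ) (hζ : ζ ∈ Set.Ioo (0 : ℝ) 1)
    (T : ℕ) (hT : 2 ≤ T)
    (P : S → S → A → ℝ)
    (hPnonneg : ∀ s' s a, 0 ≤ P s' s a) (hPsum : ∀ s a, ∑ s', P s' s a = 1)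
    (s : ℕ → S) (a : ℕ → A)
    (hPpos : ∀ u, 1 ≤ u → u ≤ T - 1 → 0 < P (s (u + 1)) (s u) (a u))
    (μ : O → ℝ) (hμnonneg : ∀ o, 0 ≤ μ o) (hμsum : ∑ o, μ o = 1) :
    ∀ t, 2 ≤ t → t ≤ T →
      (∀ (om : O) (bt : Bool),
        twoStepRaw pib pihi pilo ζ P μ s a T t om bt =
          (∏ u ∈ Finset.Icc (t - 1) (T - 1), P (s (u + 1)) (s u) (a u)) *
            pib bt (s t) om *
            (∑ ot : O, pibarHi pihi ζ ot (s t) om bt * pilo (a t) (s t) ot *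
              bwdRaw pib pihi pilo ζ s a T t ot bt) *
            (∑ bm : Bool, fwdRaw pib pihi pilo ζ P μ s a (t - 1) om bm)) ∧
      ∃ c : ℝ, 0 < c ∧ ∀ (om : O) (bt : Bool),
        twoStepNorm pib pihi pilo ζ P μ s a T t om bt =
          c * pib bt (s t) om *
            (∑ ot : O, pibarHi pihi ζ ot (s t) om bt * pilo (a t) (s t) ot *
              bwdNorm pib pihi pilo ζ s a T t ot bt) *
            (∑ bm : Bool, fwdNorm pib pihi pilo ζ P μ s a (t - 1) om bm) := by
  intro t ht2 htT
  obtain ⟨m, rfl⟩ : ∃ m, T = t + m := ⟨T - t, by omega⟩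
  obtain ⟨n, rfl⟩ : ∃ n, t = n + 2 := ⟨t - 2, by omega⟩
  have hraw := twoStepRaw_factor pib pihi pilo ζ P μ s a n m
  -- positivity facts
  have hcard : (0:ℝ) < (Fintype.card O : ℝ) := by exact_mod_cast Fintype.card_pos
  have hbar : ∀ (o' : O) (st : S) (o : O) (b : Bool), 0 < pibarHi pihi ζ o' st o b := by
    intro o' st o b
    obtain ⟨hζ0, hζ1⟩ := hζ
    have hdiv : 0 < ζ / (Fintype.card O : ℝ) := div_pos hζ0 hcard
    unfold pibarHi
    split_ifs
    · exact hpihi_pos _ _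
    · linarith
    · exact hdiv
  have hh : ∀ (om' : O) (st : S) (aa : A) (o : O) (b : Bool),
      0 < hFac pib pihi pilo ζ om' st aa o b := fun _ _ _ _ _ =>
    mul_pos (mul_pos (hpib_pos _ _ _) (hbar _ _ _ _)) (hpilo_pos _ _ _)
  have hP1 : ∀ u ∈ Finset.Icc 1 n, 0 < P (s (u+1)) (s u) (a u) := by
    intro u hu
    simp only [Finset.mem_Icc] at hu
    exact hPpos u hu.1 (by omega)
  have hfwd : ∀ (o' : O) (bm : Bool), 0 < fwdRaw pib pihi pilo ζ P μ s a (n+1) o' bm := by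
    intro o' bm
    rw [fwdRaw_succ]
    obtain ⟨oz, hoz⟩ : ∃ o0, 0 < μ o0 := by
      by_contra hc
      push_neg at hc
      have hle : ∑ o : O, μ o ≤ 0 := Finset.sum_nonpos fun o _ => hc o
      rw [hμsum] at hle
      linarith
    refine Finset.sum_pos' (fun o0 _ => Finset.sum_nonneg fun op _ =>
      Finset.sum_nonneg fun bp _ => ?_) ⟨oz, Finset.mem_univ _, ?_⟩
    · exact mul_nonneg (mul_nonneg (hμnonneg _)
        (Finset.prod_pos (fun u _ => hh _ _ _ _ _)).le) (Finset.prod_pos hP1).le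
    · refine Finset.sum_pos (fun op _ => Finset.sum_pos (fun bp _ => ?_)
        Finset.univ_nonempty) Finset.univ_nonempty
      exact mul_pos (mul_pos hoz (Finset.prod_pos fun u _ => hh _ _ _ _ _))
        (Finset.prod_pos hP1)
  have hbwd : ∀ (ot : O) (b : Bool), 0 < bwdRaw pib pihi pilo ζ s a (n+2+m) (n+2) ot b := by
    intro ot b
    rw [bwdRaw_clean]
    exact Finset.sum_pos (fun op _ => Finset.sum_pos (fun bp _ =>
      Finset.prod_pos fun u _ => hh _ _ _ _ _) Finset.univ_nonempty) Finset.univ_nonempty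
  have hPmid : 0 < ∏ u ∈ Finset.Icc (n+1) (n+1+m), P (s (u+1)) (s u) (a u) := by
    refine Finset.prod_pos fun u hu => ?_
    simp only [Finset.mem_Icc] at hu
    exact hPpos u (by omega) (by omega)
  have hSb : ∀ (om : O) (bt : Bool), 0 < ∑ ot : O,
      pibarHi pihi ζ ot (s (n+2)) om bt * pilo (a (n+2)) (s (n+2)) ot *
        bwdRaw pib pihi pilo ζ s a (n+2+m) (n+2) ot bt := fun om bt =>
    Finset.sum_pos (fun ot _ => mul_pos (mul_pos (hbar _ _ _ _) (hpilo_pos _ _ _))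
      (hbwd _ _)) Finset.univ_nonempty
  have hSa : ∀ (om : O), 0 < ∑ bm : Bool, fwdRaw pib pihi pilo ζ P μ s a (n+1) om bm :=
    fun om => Finset.sum_pos (fun bm _ => hfwd _ _) Finset.univ_nonempty
  have htsr : ∀ (om : O) (bt : Bool),
      0 < twoStepRaw pib pihi pilo ζ P μ s a (n+2+m) (n+2) om bt := by
    intro om bt
    rw [hraw om bt]
    exact mul_pos (mul_pos (mul_pos hPmid (hpib_pos _ _ _)) (hSb om bt)) (hSa om)
  constructor
  · intro om bt
    simp only [show n+2-1 = n+1 from rfl, show n+2+m-1 = n+1+m from by omega]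
    exact hraw om bt
  · have hZ : 0 < ∑ p : O × Bool, twoStepRaw pib pihi pilo ζ P μ s a (n+2+m) (n+2) p.1 p.2 :=
      Finset.sum_pos (fun p _ => htsr p.1 p.2) Finset.univ_nonempty
    have hZb : 0 < ∑ p : O × Bool, bwdRaw pib pihi pilo ζ s a (n+2+m) (n+2) p.1 p.2 :=
      Finset.sum_pos (fun p _ => hbwd p.1 p.2) Finset.univ_nonempty
    have hZa : 0 < ∑ p : O × Bool, fwdRaw pib pihi pilo ζ P μ s a (n+1) p.1 p.2 :=
      Finset.sum_pos (fun p _ => hfwd p.1 p.2) Finset.univ_nonempty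
    refine ⟨(∏ u ∈ Finset.Icc (n+1) (n+1+m), P (s (u+1)) (s u) (a u)) *
        (∑ p : O × Bool, bwdRaw pib pihi pilo ζ s a (n+2+m) (n+2) p.1 p.2) *
        (∑ p : O × Bool, fwdRaw pib pihi pilo ζ P μ s a (n+1) p.1 p.2) /
        (∑ p : O × Bool, twoStepRaw pib pihi pilo ζ P μ s a (n+2+m) (n+2) p.1 p.2),
      div_pos (mul_pos (mul_pos hPmid hZb) hZa) hZ, ?_⟩
    intro om bt
    simp only [show n+2-1 = n+1 from rfl]
    rw [twoStepNorm, hraw om bt]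
    simp only [bwdNorm, fwdNorm]
    have h1 : (∑ ot : O, pibarHi pihi ζ ot (s (n+2)) om bt * pilo (a (n+2)) (s (n+2)) ot *
        (bwdRaw pib pihi pilo ζ s a (n+2+m) (n+2) ot bt /
          ∑ p : O × Bool, bwdRaw pib pihi pilo ζ s a (n+2+m) (n+2) p.1 p.2)) =
        (∑ ot : O, pibarHi pihi ζ ot (s (n+2)) om bt * pilo (a (n+2)) (s (n+2)) ot *
          bwdRaw pib pihi pilo ζ s a (n+2+m) (n+2) ot bt) /
        (∑ p : O × Bool, bwdRaw pib pihi pilo ζ s a (n+2+m) (n+2) p.1 p.2) := by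
      rw [Finset.sum_div]
      exact Finset.sum_congr rfl fun ot _ => (mul_div_assoc _ _ _).symm
    have h2 : (∑ bm : Bool, fwdRaw pib pihi pilo ζ P μ s a (n+1) om bm /
        ∑ p : O × Bool, fwdRaw pib pihi pilo ζ P μ s a (n+1) p.1 p.2) =
        (∑ bm : Bool, fwdRaw pib pihi pilo ζ P μ s a (n+1) om bm) /
        (∑ p : O × Bool, fwdRaw pib pihi pilo ζ P μ s a (n+1) p.1 p.2) :=
      (Finset.sum_div _ _ _).symm
    rw [h1, h2]
    field_simp
end

section
/- (Perturbation bound for the forward smoothing kernel.) For every probability mass function φ on O×B, ‖φK^{θ̂,θ} − φK^{θ,θ}‖_TV ≤ [max_{o⁻,o,b} h(θ;o⁻,s,a,o,b) / min_{o⁻,o,b} h(θ;o⁻,s,a,o,b)] · L‖θ̂ − θ‖₂ / min_{o⁻,o,b} h(θ̂;o⁻,s,a,o,b), where the maxima and minima are over (o⁻,o,b) ∈ O×O×B with s, a fixed. -/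
open Finset

/-- Total variation distance between two real-valued functions on a finite set. -/
noncomputable def tvDist {Y : Type*} [Fintype Y] (p q : Y → ℝ) : ℝ :=
  (1 / 2) * ∑ y, |p y - q y|

/-- The combined high-level policy `π̄_hi(o'|s,o,b;θ)` of the
options-with-failure framework with failure parameter `ζ`. -/
noncomputable def pibarHiP {S O E : Type*} [Fintype O] [DecidableEq O]
    (pihi : O → S → E → ℝ) (ζ : ℝ) (o' : O) (s : S) (o : O) (b : Bool) (θ : E) : ℝ :=
  if b then pihi o' s θ
  else if o' = o then 1 - ζ + ζ / (Fintype.card O : ℝ)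
  else ζ / (Fintype.card O : ℝ)

/-- The one-step factor `h(θ;o⁻,s,a,o,b) = π_b(b|s,o⁻;θ)·π̄_hi(o|s,o⁻,b;θ)·π_lo(a|s,o;θ)`. -/
noncomputable def hFacP {S A O E : Type*} [Fintype O] [DecidableEq O]
    (pib : Bool → S → O → E → ℝ) (pihi : O → S → E → ℝ) (pilo : A → S → O → E → ℝ)
    (ζ : ℝ) (θ : E) (om : O) (s : S) (a : A) (o : O) (b : Bool) : ℝ :=
  pib b s om θ * pibarHiP pihi ζ o s om b θ * pilo a s o θ

/-- The (possibly perturbed) forward smoothing kernel applied to a probability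
mass function `φ` on `O × B`: `h1 om o b` is the numerator one-step factor,
`h2 om o b` the one in the normalizing denominator, `ρ` the backward weights
and `C` the global normalizing constant.  With `h1 = h2` and `C = 1` this is
`φ ↦ φK^{θ,θ}`; with `h1 = h(θ̂;·)`, `h2 = h(θ;·)` it is `φ ↦ φK^{θ̂,θ}`. -/
noncomputable def fwdSmoothKer {O : Type*} [Fintype O]
    (h1 h2 : O → O → Bool → ℝ) (ρ φ : O × Bool → ℝ) (C : ℝ)
    (p : O × Bool) : ℝ :=
  C * ∑ q : O × Bool,
    (h1 q.1 p.1 p.2 * ρ p / ∑ r : O × Bool, h2 q.1 r.1 r.2 * ρ r) * φ q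

/-!
Write `f := φK^{θ,θ}` and `φK^{θ̂,θ} = C • g`, where `g` has the perturbed numerators
`h(θ̂)` but the unperturbed row normalisers `D_q = ∑_r h(θ; q, r) ρ(r) ≥ min h(θ) · ∑ ρ`.
Entrywise the Lipschitz bound gives `‖g - f‖₁ ≤ L‖θ̂ - θ‖ / min h(θ)`, and every row of `g`
has mass at least `min h(θ̂) / max h(θ)`, so `C ≤ max h(θ) / min h(θ̂)`. Finally, rescaling
`g` to mass one by `C` moves it at most `C • ‖g - f‖₁` away from the probability vector `f`
in total variation.
-/

theorem tvDist_const_mul_le {Y : Type*} [Fintype Y] {f g : Y → ℝ} {C : ℝ}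
    (hf : ∀ y, 0 ≤ f y) (hf1 : ∑ y, f y = 1) (hC : 0 < C) (hCg : C * ∑ y, g y = 1) :
    tvDist (fun y => C * g y) f ≤ C * ∑ y, |g y - f y| := by
  set ε := ∑ y, |g y - f y|
  -- `C • g` and `f` both have mass one
  have hC1 : |C - 1| ≤ C * ε :=
    calc |C - 1| = |C * (∑ y, g y - ∑ y, f y)| := by rw [hf1, mul_sub, hCg, mul_one, abs_sub_comm]
      _ = C * |∑ y, (g y - f y)| := by rw [abs_mul, abs_of_pos hC, sum_sub_distrib]
      _ ≤ C * ε := by gcongr; exact abs_sum_le_sum_abs _ _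
  have hpt : ∀ y, |C * g y - f y| ≤ C * |g y - f y| + |C - 1| * f y := fun y =>
    calc |C * g y - f y| = |C * (g y - f y) + (C - 1) * f y| := by ring_nf
      _ ≤ |C * (g y - f y)| + |(C - 1) * f y| := abs_add_le _ _
      _ = C * |g y - f y| + |C - 1| * f y := by
          rw [abs_mul, abs_mul, abs_of_pos hC, abs_of_nonneg (hf y)]
  calc tvDist (fun y => C * g y) f = 1 / 2 * ∑ y, |C * g y - f y| := rfl
    _ ≤ 1 / 2 * ∑ y, (C * |g y - f y| + |C - 1| * f y) := by gcongr with y; exact hpt y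
    _ = 1 / 2 * (C * ε + |C - 1|) := by rw [sum_add_distrib, ← mul_sum, ← mul_sum, hf1, mul_one]
    _ ≤ C * ε := by linarith

theorem mul_sum_le_sum_mul {ι : Type*} (s : Finset ι) {w x : ι → ℝ} {m : ℝ}
    (hw : ∀ i ∈ s, 0 ≤ w i) (hx : ∀ i ∈ s, m ≤ x i) :
    m * ∑ i ∈ s, w i ≤ ∑ i ∈ s, x i * w i := by
  rw [mul_sum]
  exact sum_le_sum fun i hi => mul_le_mul_of_nonneg_right (hx i hi) (hw i hi)

theorem sum_mul_le_mul_sum {ι : Type*} (s : Finset ι) {w x : ι → ℝ} {M : ℝ}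
    (hw : ∀ i ∈ s, 0 ≤ w i) (hx : ∀ i ∈ s, x i ≤ M) :
    ∑ i ∈ s, x i * w i ≤ M * ∑ i ∈ s, w i := by
  rw [mul_sum]
  exact sum_le_sum fun i hi => mul_le_mul_of_nonneg_right (hx i hi) (hw i hi)

section ForwardSmoothing

variable {O : Type*} [Fintype O] {ρ φ : O × Bool → ℝ}

theorem fwdSmoothKer_eq_mul {h₁ h₂ : O → O → Bool → ℝ} {C : ℝ} :
    fwdSmoothKer h₁ h₂ ρ φ C = fun p => C * fwdSmoothKer h₁ h₂ ρ φ 1 p := by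
  funext p
  simp only [fwdSmoothKer, one_mul]

theorem sum_fwdSmoothKer {h₁ h₂ : O → O → Bool → ℝ} :
    ∑ p, fwdSmoothKer h₁ h₂ ρ φ 1 p =
      ∑ q : O × Bool, (∑ p : O × Bool, h₁ q.1 p.1 p.2 * ρ p) /
        (∑ r : O × Bool, h₂ q.1 r.1 r.2 * ρ r) * φ q := by
  simp only [fwdSmoothKer, one_mul, sum_div, sum_mul]
  exact sum_comm

theorem fwdSmoothKer_sub {h₁ h₂ : O → O → Bool → ℝ} {p : O × Bool} :
    fwdSmoothKer h₁ h₂ ρ φ 1 p - fwdSmoothKer h₂ h₂ ρ φ 1 p =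
      ∑ q : O × Bool, (h₁ q.1 p.1 p.2 - h₂ q.1 p.1 p.2) * ρ p /
        (∑ r : O × Bool, h₂ q.1 r.1 r.2 * ρ r) * φ q := by
  simp only [fwdSmoothKer, one_mul, ← sum_sub_distrib]
  congr! 1 with q
  ring

theorem fwdSmoothKer_nonneg {h : O → O → Bool → ℝ} (hh : ∀ om o b, 0 ≤ h om o b)
    (hρ : ∀ p, 0 ≤ ρ p) (hφ : ∀ p, 0 ≤ φ p) (p : O × Bool) :
    0 ≤ fwdSmoothKer h h ρ φ 1 p := by
  have hD : ∀ q : O, 0 ≤ ∑ r : O × Bool, h q r.1 r.2 * ρ r := fun q =>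
    sum_nonneg fun r _ => mul_nonneg (hh _ _ _) (hρ r)
  exact mul_nonneg zero_le_one <| sum_nonneg fun q _ =>
    mul_nonneg (div_nonneg (mul_nonneg (hh _ _ _) (hρ p)) (hD q.1)) (hφ q)

theorem sum_fwdSmoothKer_self [Nonempty O] {h : O → O → Bool → ℝ} (hh : ∀ om o b, 0 < h om o b)
    (hρ : ∀ p, 0 < ρ p) :
    ∑ p, fwdSmoothKer h h ρ φ 1 p = ∑ p, φ p := by
  rw [sum_fwdSmoothKer]
  refine sum_congr rfl fun q _ => ?_
  rw [div_self (sum_pos (fun r _ => mul_pos (hh _ _ _) (hρ r)) univ_nonempty).ne', one_mul]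

theorem sum_abs_fwdSmoothKer_sub_le [Nonempty O] {h h' : O → O → Bool → ℝ} {m δ : ℝ}
    (hm : 0 < m) (hmh : ∀ om o b, m ≤ h om o b) (hδ : ∀ om o b, |h' om o b - h om o b| ≤ δ)
    (hρ : ∀ p, 0 < ρ p) (hφ : ∀ p, 0 ≤ φ p) (hφ1 : ∑ p, φ p = 1) :
    ∑ p, |fwdSmoothKer h' h ρ φ 1 p - fwdSmoothKer h h ρ φ 1 p| ≤ δ / m := by
  obtain ⟨o⟩ := ‹Nonempty O›
  have hδ0 : 0 ≤ δ := (abs_nonneg _).trans (hδ o o true)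
  set R := ∑ r, ρ r
  have hR : 0 < R := sum_pos (fun r _ => hρ r) univ_nonempty
  have hD : ∀ q : O, m * R ≤ ∑ r : O × Bool, h q r.1 r.2 * ρ r := fun q =>
    mul_sum_le_sum_mul _ (fun r _ => (hρ r).le) (fun r _ => hmh q r.1 r.2)
  have hpt : ∀ p, |fwdSmoothKer h' h ρ φ 1 p - fwdSmoothKer h h ρ φ 1 p| ≤ δ / m * (ρ p / R) := by
    intro p
    rw [fwdSmoothKer_sub]
    calc _ ≤ ∑ q : O × Bool, |(h' q.1 p.1 p.2 - h q.1 p.1 p.2) * ρ p /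
              (∑ r : O × Bool, h q.1 r.1 r.2 * ρ r) * φ q| := abs_sum_le_sum_abs _ _
      _ ≤ ∑ q : O × Bool, δ * ρ p / (m * R) * φ q := by
          refine sum_le_sum fun q _ => ?_
          rw [abs_mul, abs_div, abs_mul, abs_of_pos (hρ p), abs_of_nonneg (hφ q),
            abs_of_pos ((mul_pos hm hR).trans_le (hD q.1))]
          exact mul_le_mul_of_nonneg_right (div_le_div₀ (mul_nonneg hδ0 (hρ p).le)
            (mul_le_mul_of_nonneg_right (hδ _ _ _) (hρ p).le) (mul_pos hm hR) (hD q.1)) (hφ q)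
      _ = δ / m * (ρ p / R) := by rw [← mul_sum, hφ1]; field_simp
  calc _ ≤ ∑ p, δ / m * (ρ p / R) := sum_le_sum fun p _ => hpt p
    _ = δ / m := by rw [← mul_sum, ← sum_div, div_self hR.ne', mul_one]

theorem div_le_sum_fwdSmoothKer [Nonempty O] {h h' : O → O → Bool → ℝ} {M m' : ℝ}
    (hh : ∀ om o b, 0 < h om o b) (hhM : ∀ om o b, h om o b ≤ M)
    (hm' : 0 ≤ m') (hh' : ∀ om o b, m' ≤ h' om o b)
    (hρ : ∀ p, 0 < ρ p) (hφ : ∀ p, 0 ≤ φ p) (hφ1 : ∑ p, φ p = 1) :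
    m' / M ≤ ∑ p, fwdSmoothKer h' h ρ φ 1 p := by
  set R := ∑ r, ρ r
  have hR : 0 < R := sum_pos (fun r _ => hρ r) univ_nonempty
  rw [sum_fwdSmoothKer]
  calc m' / M = ∑ q : O × Bool, m' * R / (M * R) * φ q := by
        rw [← mul_sum, hφ1, mul_one, mul_div_mul_right _ _ hR.ne']
    _ ≤ _ := by
      refine sum_le_sum fun q _ => mul_le_mul_of_nonneg_right (div_le_div₀ ?_ ?_ ?_ ?_) (hφ q)
      · exact sum_nonneg fun p _ => mul_nonneg (hm'.trans (hh' _ _ _)) (hρ p).le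
      · exact mul_sum_le_sum_mul _ (fun r _ => (hρ r).le) (fun r _ => hh' q.1 r.1 r.2)
      · exact sum_pos (fun r _ => mul_pos (hh _ _ _) (hρ r)) univ_nonempty
      · exact sum_mul_le_mul_sum _ (fun r _ => (hρ r).le) (fun r _ => hhM q.1 r.1 r.2)

theorem tvDist_fwdSmoothKer_le [Nonempty O] {h h' : O → O → Bool → ℝ} {m M m' δ C : ℝ}
    (hm : 0 < m) (hmh : ∀ om o b, m ≤ h om o b) (hhM : ∀ om o b, h om o b ≤ M)
    (hm' : 0 < m') (hh' : ∀ om o b, m' ≤ h' om o b)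
    (hδ : ∀ om o b, |h' om o b - h om o b| ≤ δ)
    (hρ : ∀ p, 0 < ρ p) (hφ : ∀ p, 0 ≤ φ p) (hφ1 : ∑ p, φ p = 1)
    (hC : ∑ p, fwdSmoothKer h' h ρ φ C p = 1) :
    tvDist (fwdSmoothKer h' h ρ φ C) (fwdSmoothKer h h ρ φ 1) ≤ M / m * δ / m' := by
  have hpos : ∀ om o b, 0 < h om o b := fun om o b => hm.trans_le (hmh om o b)
  obtain ⟨o⟩ := ‹Nonempty O›
  have hM : 0 < M := (hpos o o true).trans_le (hhM o o true)
  have hg : m' / M ≤ ∑ p, fwdSmoothKer h' h ρ φ 1 p :=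
    div_le_sum_fwdSmoothKer hpos hhM hm'.le hh' hρ hφ hφ1
  have hgpos := (div_pos hm' hM).trans_le hg
  have hCg : C * ∑ p, fwdSmoothKer h' h ρ φ 1 p = 1 := by
    simp only [fwdSmoothKer_eq_mul (C := C)] at hC
    rwa [mul_sum]
  have hCpos : 0 < C := pos_of_mul_pos_left (hCg.symm ▸ one_pos) hgpos.le
  have hCle : C ≤ M / m' := by
    rw [eq_one_div_of_mul_eq_one_left hCg, ← one_div_div m' M]
    exact one_div_le_one_div_of_le (div_pos hm' hM) hg
  rw [fwdSmoothKer_eq_mul (C := C)]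
  calc _ ≤ C * ∑ p, |fwdSmoothKer h' h ρ φ 1 p - fwdSmoothKer h h ρ φ 1 p| :=
        tvDist_const_mul_le
          (fwdSmoothKer_nonneg (fun _ _ _ => (hpos _ _ _).le) (fun p => (hρ p).le) hφ)
          (by rw [sum_fwdSmoothKer_self hpos hρ, hφ1]) hCpos hCg
    _ ≤ M / m' * (δ / m) :=
        mul_le_mul hCle (sum_abs_fwdSmoothKer_sub_le hm hmh hδ hρ hφ hφ1)
          (sum_nonneg fun _ _ => abs_nonneg _) (div_pos hM hm').le
    _ = M / m * δ / m' := by ring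

end ForwardSmoothing

section Options

variable {S A O E : Type*} [Fintype O] [Nonempty O] [DecidableEq O] {ζ : ℝ} {s : S} {θ : E}

theorem pibarHiP_pos {pihi : O → S → E → ℝ} (hζ : ζ ∈ Set.Ioo (0 : ℝ) 1)
    (hpihi : ∀ o, 0 < pihi o s θ) (o' o : O) (b : Bool) :
    0 < pibarHiP pihi ζ o' s o b θ := by
  have hfail : 0 < ζ / Fintype.card O := div_pos hζ.1 (mod_cast Fintype.card_pos)
  unfold pibarHiP
  split_ifs
  · exact hpihi o'
  · linarith [hζ.2]
  · exact hfail

theorem hFacP_pos {pib : Bool → S → O → E → ℝ} {pihi : O → S → E → ℝ}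
    {pilo : A → S → O → E → ℝ} {a : A} (hζ : ζ ∈ Set.Ioo (0 : ℝ) 1)
    (hpib : ∀ b o, 0 < pib b s o θ) (hpihi : ∀ o, 0 < pihi o s θ)
    (hpilo : ∀ o, 0 < pilo a s o θ) (om o : O) (b : Bool) :
    0 < hFacP pib pihi pilo ζ θ om s a o b :=
  mul_pos (mul_pos (hpib b om) (pibarHiP_pos hζ hpihi o om b)) (hpilo o)

end Options

theorem forward_smoothing_kernel_perturbation_general {d : ℕ} {S A O : Type*}
    [Fintype O]
    [Nonempty O] [DecidableEq O]
    (θ θhat : EuclideanSpace ℝ (Fin d))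
    (pib : Bool → S → O → EuclideanSpace ℝ (Fin d) → ℝ)
    (pihi : O → S → EuclideanSpace ℝ (Fin d) → ℝ)
    (pilo : A → S → O → EuclideanSpace ℝ (Fin d) → ℝ)
    (hpib_pos : ∀ ϑ ∈ ({θ, θhat} : Set (EuclideanSpace ℝ (Fin d))),
      ∀ (b : Bool) (s : S) (o : O), 0 < pib b s o ϑ)
    (hpihi_pos : ∀ ϑ ∈ ({θ, θhat} : Set (EuclideanSpace ℝ (Fin d))),
      ∀ (o : O) (s : S), 0 < pihi o s ϑ)
    (hpilo_pos : ∀ ϑ ∈ ({θ, θhat} : Set (EuclideanSpace ℝ (Fin d))),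
      ∀ (a : A) (s : S) (o : O), 0 < pilo a s o ϑ)
    (ζ : ℝ) (hζ : ζ ∈ Set.Ioo (0 : ℝ) 1)
    (s : S) (a : A)
    (ρ : O × Bool → ℝ) (hρpos : ∀ p, 0 < ρ p)
    (L : ℝ)
    (hLip : ∀ (om o : O) (b : Bool),
      |hFacP pib pihi pilo ζ θhat om s a o b - hFacP pib pihi pilo ζ θ om s a o b|
        ≤ L * ‖θhat - θ‖)
    (φ : O × Bool → ℝ) (hφnonneg : ∀ p, 0 ≤ φ p) (hφsum : ∑ p, φ p = 1)
    (C : ℝ)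
    (hC : ∑ p : O × Bool,
      fwdSmoothKer (fun om o b => hFacP pib pihi pilo ζ θhat om s a o b)
        (fun om o b => hFacP pib pihi pilo ζ θ om s a o b) ρ φ C p = 1) :
    tvDist
      (fwdSmoothKer (fun om o b => hFacP pib pihi pilo ζ θhat om s a o b)
        (fun om o b => hFacP pib pihi pilo ζ θ om s a o b) ρ φ C)
      (fwdSmoothKer (fun om o b => hFacP pib pihi pilo ζ θ om s a o b)
        (fun om o b => hFacP pib pihi pilo ζ θ om s a o b) ρ φ 1)
    ≤ (univ.sup' univ_nonempty
          (fun z : O × O × Bool => hFacP pib pihi pilo ζ θ z.1 s a z.2.1 z.2.2) /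
        univ.inf' univ_nonempty
          (fun z : O × O × Bool => hFacP pib pihi pilo ζ θ z.1 s a z.2.1 z.2.2)) *
      (L * ‖θhat - θ‖) /
        univ.inf' univ_nonempty
          (fun z : O × O × Bool => hFacP pib pihi pilo ζ θhat z.1 s a z.2.1 z.2.2) := by
  have hpos : ∀ ϑ ∈ ({θ, θhat} : Set (EuclideanSpace ℝ (Fin d))),
      ∀ om o b, 0 < hFacP pib pihi pilo ζ ϑ om s a o b := fun ϑ hϑ =>
    hFacP_pos hζ (fun b o => hpib_pos ϑ hϑ b s o) (fun o => hpihi_pos ϑ hϑ o s)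
      (fun o => hpilo_pos ϑ hϑ a s o)
  refine tvDist_fwdSmoothKer_le ?_ (fun om o b => inf'_le _ (mem_univ (om, o, b)))
    (fun om o b => le_sup' (fun z : O × O × Bool => hFacP pib pihi pilo ζ θ z.1 s a z.2.1 z.2.2)
      (mem_univ (om, o, b)))
    ?_ (fun om o b => inf'_le _ (mem_univ (om, o, b))) hLip hρpos hφnonneg hφsum hC
  · exact (lt_inf'_iff _).2 fun z _ => hpos θ (by simp) z.1 z.2.1 z.2.2
  · exact (lt_inf'_iff _).2 fun z _ => hpos θhat (by simp) z.1 z.2.1 z.2.2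

/-- **Perturbation bound for the forward smoothing kernel.** -/
theorem forward_smoothing_kernel_perturbation {d : ℕ} {S A O : Type*}
    [Fintype S] [Fintype A] [Fintype O]
    [Nonempty S] [Nonempty A] [Nonempty O] [DecidableEq O]
    (θ θhat : EuclideanSpace ℝ (Fin d))
    (pib : Bool → S → O → EuclideanSpace ℝ (Fin d) → ℝ)
    (pihi : O → S → EuclideanSpace ℝ (Fin d) → ℝ)
    (pilo : A → S → O → EuclideanSpace ℝ (Fin d) → ℝ)
    (hpib_pos : ∀ ϑ ∈ ({θ, θhat} : Set (EuclideanSpace ℝ (Fin d))),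
      ∀ (b : Bool) (s : S) (o : O), 0 < pib b s o ϑ)
    (hpib_sum : ∀ ϑ ∈ ({θ, θhat} : Set (EuclideanSpace ℝ (Fin d))),
      ∀ (s : S) (o : O), ∑ b, pib b s o ϑ = 1)
    (hpihi_pos : ∀ ϑ ∈ ({θ, θhat} : Set (EuclideanSpace ℝ (Fin d))),
      ∀ (o : O) (s : S), 0 < pihi o s ϑ)
    (hpihi_sum : ∀ ϑ ∈ ({θ, θhat} : Set (EuclideanSpace ℝ (Fin d))),
      ∀ s : S, ∑ o, pihi o s ϑ = 1)
    (hpilo_pos : ∀ ϑ ∈ ({θ, θhat} : Set (EuclideanSpace ℝ (Fin d))),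
      ∀ (a : A) (s : S) (o : O), 0 < pilo a s o ϑ)
    (hpilo_sum : ∀ ϑ ∈ ({θ, θhat} : Set (EuclideanSpace ℝ (Fin d))),
      ∀ (s : S) (o : O), ∑ a, pilo a s o ϑ = 1)
    (ζ : ℝ) (hζ : ζ ∈ Set.Ioo (0 : ℝ) 1)
    (s : S) (a : A)
    (ρ : O × Bool → ℝ) (hρpos : ∀ p, 0 < ρ p) (hρsum : ∑ p, ρ p = 1)
    (L : ℝ) (hL : 0 ≤ L)
    (hLip : ∀ (om o : O) (b : Bool),
      |hFacP pib pihi pilo ζ θhat om s a o b - hFacP pib pihi pilo ζ θ om s a o b|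
        ≤ L * ‖θhat - θ‖)
    (φ : O × Bool → ℝ) (hφnonneg : ∀ p, 0 ≤ φ p) (hφsum : ∑ p, φ p = 1)
    (C : ℝ) (hCpos : 0 < C)
    (hC : ∑ p : O × Bool,
      fwdSmoothKer (fun om o b => hFacP pib pihi pilo ζ θhat om s a o b)
        (fun om o b => hFacP pib pihi pilo ζ θ om s a o b) ρ φ C p = 1) :
    tvDist
      (fwdSmoothKer (fun om o b => hFacP pib pihi pilo ζ θhat om s a o b)
        (fun om o b => hFacP pib pihi pilo ζ θ om s a o b) ρ φ C)
      (fwdSmoothKer (fun om o b => hFacP pib pihi pilo ζ θ om s a o b)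
        (fun om o b => hFacP pib pihi pilo ζ θ om s a o b) ρ φ 1)
    ≤ (univ.sup' univ_nonempty
          (fun z : O × O × Bool => hFacP pib pihi pilo ζ θ z.1 s a z.2.1 z.2.2) /
        univ.inf' univ_nonempty
          (fun z : O × O × Bool => hFacP pib pihi pilo ζ θ z.1 s a z.2.1 z.2.2)) *
      (L * ‖θhat - θ‖) /
        univ.inf' univ_nonempty
          (fun z : O × O × Bool => hFacP pib pihi pilo ζ θhat z.1 s a z.2.1 z.2.2) :=
  forward_smoothing_kernel_perturbation_general θ θhat pib pihi pilo hpib_pos hpihi_pos hpilo_pos ζ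
    hζ s a ρ hρpos L hLip φ hφnonneg hφsum C hC
end

section
/- (Perturbation bound for the backward smoothing kernel.) For every probability mass function ρ on O×B, ‖ρK_B^{θ,θ̂} − ρK_B^{θ,θ}‖_TV ≤ [max_{o,o⁺,b⁺} h(θ;o,s',a',o⁺,b⁺) / min_{o,o⁺,b⁺} h(θ;o,s',a',o⁺,b⁺)] · L‖θ̂ − θ‖₂ / min_{o,o⁺,b⁺} h(θ̂;o,s',a',o⁺,b⁺), where the maxima and minima are over (o,o⁺,b⁺) ∈ O×O×B with s', a' fixed. -/
open Finset

/-- The (possibly perturbed) backward smoothing kernel applied to a probability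
mass function `ρ` on `O × B`: `h1 o o⁺ b⁺` is the numerator one-step factor,
`h2 o' o⁺ b⁺` the one in the normalizing denominator, `φ` the forward weights
and `C` the global normalizing constant.  With `h1 = h2` and `C = 1` this is
`ρ ↦ ρK_B^{θ,θ}`; with `h1 = h(θ̂;·)`, `h2 = h(θ;·)` it is `ρ ↦ ρK_B^{θ,θ̂}`. -/
noncomputable def bwdSmoothKer {O : Type*} [Fintype O]
    (h1 h2 : O → O → Bool → ℝ) (φ ρ : O × Bool → ℝ) (C : ℝ)
    (p : O × Bool) : ℝ :=
  C * ∑ q : O × Bool,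
    (h1 p.1 q.1 q.2 * φ p / ∑ r : O × Bool, h2 r.1 q.1 q.2 * φ r) * ρ q

lemma bwd_aux {O : Type*} [Fintype O] [Nonempty O]
    (h1 h2 : O → O → Bool → ℝ) (φ ρ : O × Bool → ℝ)
    (hφpos : ∀ p, 0 < φ p) (hφsum : ∑ p, φ p = 1)
    (hρ0 : ∀ p, 0 ≤ ρ p) (hρsum : ∑ p, ρ p = 1)
    (m M mh : ℝ) (hm : 0 < m) (hmh : 0 < mh)
    (hml : ∀ o op bp, m ≤ h2 o op bp) (hMu : ∀ o op bp, h2 o op bp ≤ M)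
    (hmhl : ∀ o op bp, mh ≤ h1 o op bp)
    (Δ : ℝ) (hΔ0 : 0 ≤ Δ)
    (hLip : ∀ o op bp, |h1 o op bp - h2 o op bp| ≤ Δ)
    (C : ℝ) (hCpos : 0 < C)
    (hC : ∑ p, bwdSmoothKer h1 h2 φ ρ C p = 1) :
    tvDist (bwdSmoothKer h1 h2 φ ρ C) (bwdSmoothKer h2 h2 φ ρ 1) ≤ (M / m) * Δ / mh := by
  classical
  set D : O × Bool → ℝ := fun q => ∑ r : O × Bool, h2 r.1 q.1 q.2 * φ r with hD
  have hDlb : ∀ q : O × Bool, m ≤ D q := by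
    intro q
    calc m = ∑ r : O × Bool, m * φ r := by rw [← Finset.mul_sum, hφsum, mul_one]
      _ ≤ D q := Finset.sum_le_sum fun r _ =>
          mul_le_mul_of_nonneg_right (hml r.1 q.1 q.2) (hφpos r).le
  have hDub : ∀ q : O × Bool, D q ≤ M := by
    intro q
    calc D q ≤ ∑ r : O × Bool, M * φ r := Finset.sum_le_sum fun r _ =>
          mul_le_mul_of_nonneg_right (hMu r.1 q.1 q.2) (hφpos r).le
      _ = M := by rw [← Finset.mul_sum, hφsum, mul_one]
  have hDpos : ∀ q, 0 < D q := fun q => lt_of_lt_of_le hm (hDlb q)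
  have hmM : m ≤ M := le_trans (hDlb (Classical.arbitrary _)) (hDub _)
  have hM : 0 < M := lt_of_lt_of_le hm hmM
  set A : O × Bool → ℝ := fun p => ∑ q : O × Bool, (h1 p.1 q.1 q.2 * φ p / D q) * ρ q with hA
  set B : O × Bool → ℝ := fun p => ∑ q : O × Bool, (h2 p.1 q.1 q.2 * φ p / D q) * ρ q with hB
  have hKA : ∀ p, bwdSmoothKer h1 h2 φ ρ C p = C * A p := fun _ => rfl
  have hKB : ∀ p, bwdSmoothKer h2 h2 φ ρ 1 p = B p := fun p => one_mul (B p)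
  have hBnn : ∀ p, 0 ≤ B p := by
    intro p
    apply Finset.sum_nonneg
    intro q _
    have := hm.trans_le (hml p.1 q.1 q.2)
    have := hφpos p
    have := hDpos q
    have := hρ0 q
    positivity
  have hBsum : ∑ p : O × Bool, B p = 1 := by
    rw [hB, Finset.sum_comm]
    calc ∑ q : O × Bool, ∑ p : O × Bool, (h2 p.1 q.1 q.2 * φ p / D q) * ρ q
        = ∑ q : O × Bool, ρ q := by
          apply Finset.sum_congr rfl
          intro q _
          rw [← Finset.sum_mul, ← Finset.sum_div]
          rw [show (∑ p : O × Bool, h2 p.1 q.1 q.2 * φ p) = D q from rfl]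
          rw [div_self (hDpos q).ne', one_mul]
      _ = 1 := hρsum
  have hC' : C * ∑ p : O × Bool, A p = 1 := by
    rw [Finset.mul_sum]; exact hC
  -- lower bound on sum of A
  have hAlb : mh / M ≤ ∑ p : O × Bool, A p := by
    have hterm : ∀ p : O × Bool, mh / M * φ p ≤ A p := by
      intro p
      calc mh / M * φ p = ∑ q : O × Bool, (mh * φ p / M) * ρ q := by
            rw [← Finset.mul_sum, hρsum, mul_one]; ring
        _ ≤ A p := by
            apply Finset.sum_le_sum
            intro q _
            apply mul_le_mul_of_nonneg_right _ (hρ0 q)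
            apply div_le_div₀ (mul_nonneg ((hmh.le).trans (hmhl p.1 q.1 q.2)) (hφpos p).le) (mul_le_mul_of_nonneg_right (hmhl p.1 q.1 q.2) (hφpos p).le) (hDpos q) (hDub q)
      -- positivity side goal: 0 ≤ h1 p.1 q.1 q.2 * φ p
    calc mh / M = ∑ p : O × Bool, mh / M * φ p := by
          rw [← Finset.mul_sum, hφsum, mul_one]
      _ ≤ ∑ p : O × Bool, A p := Finset.sum_le_sum fun p _ => hterm p
  have hSA : ∑ p : O × Bool, A p = 1 / C := eq_one_div_of_mul_eq_one_left (by rw [mul_comm]; exact hC')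
  have hCle : C ≤ M / mh := by
    have h1 : mh / M ≤ 1 / C := hSA ▸ hAlb
    rw [div_le_div_iff₀ hM hCpos] at h1
    rw [le_div_iff₀ hmh]
    nlinarith
  -- bound on ∑ |A - B|
  have hdiff : ∑ p : O × Bool, |A p - B p| ≤ Δ / m := by
    have hterm : ∀ p : O × Bool, |A p - B p| ≤ ∑ q : O × Bool, (Δ / m) * (φ p * ρ q) := by
      intro p
      have hAB : A p - B p
          = ∑ q : O × Bool, ((h1 p.1 q.1 q.2 - h2 p.1 q.1 q.2) * φ p / D q) * ρ q := by
        rw [hA, hB, ← Finset.sum_sub_distrib]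
        apply Finset.sum_congr rfl
        intro q _
        ring
      rw [hAB]
      calc |∑ q : O × Bool, ((h1 p.1 q.1 q.2 - h2 p.1 q.1 q.2) * φ p / D q) * ρ q|
          ≤ ∑ q : O × Bool, |((h1 p.1 q.1 q.2 - h2 p.1 q.1 q.2) * φ p / D q) * ρ q| :=
            Finset.abs_sum_le_sum_abs _ _
        _ ≤ ∑ q : O × Bool, (Δ / m) * (φ p * ρ q) := by
            apply Finset.sum_le_sum
            intro q _
            rw [abs_mul, abs_div, abs_mul, abs_of_nonneg (hφpos p).le,
              abs_of_nonneg (hρ0 q), abs_of_pos (hDpos q)]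
            have h2' : |h1 p.1 q.1 q.2 - h2 p.1 q.1 q.2| * φ p / D q ≤ Δ * φ p / m := by
              apply div_le_div₀ (mul_nonneg hΔ0 (hφpos p).le)
                (mul_le_mul_of_nonneg_right (hLip p.1 q.1 q.2) (hφpos p).le) hm (hDlb q)
            calc |h1 p.1 q.1 q.2 - h2 p.1 q.1 q.2| * φ p / D q * ρ q
                ≤ Δ * φ p / m * ρ q := mul_le_mul_of_nonneg_right h2' (hρ0 q)
              _ = (Δ / m) * (φ p * ρ q) := by ring
    calc ∑ p : O × Bool, |A p - B p|
        ≤ ∑ p : O × Bool, ∑ q : O × Bool, (Δ / m) * (φ p * ρ q) :=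
          Finset.sum_le_sum fun p _ => hterm p
      _ = Δ / m := by
          have : ∀ p : O × Bool, ∑ q : O × Bool, (Δ / m) * (φ p * ρ q)
              = (Δ / m) * φ p := by
            intro p
            rw [← Finset.mul_sum, ← Finset.mul_sum, hρsum, mul_one]
          rw [Finset.sum_congr rfl fun p _ => this p, ← Finset.mul_sum, hφsum, mul_one]
  -- |C - 1| ≤ C * ∑ |A - B|
  have hC1 : |C - 1| ≤ C * ∑ p : O × Bool, |A p - B p| := by
    have : C - 1 = C * ∑ p : O × Bool, (B p - A p) := by
      rw [Finset.sum_sub_distrib, mul_sub, hC', hBsum]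
      ring
    rw [this, abs_mul, abs_of_pos hCpos]
    refine mul_le_mul_of_nonneg_left ?_ hCpos.le
    refine le_trans (Finset.abs_sum_le_sum_abs _ _) ?_
    exact le_of_eq (Finset.sum_congr rfl fun p _ => abs_sub_comm _ _)
  -- main TV bound
  have hTV : tvDist (bwdSmoothKer h1 h2 φ ρ C) (bwdSmoothKer h2 h2 φ ρ 1)
      ≤ C * ∑ p : O × Bool, |A p - B p| := by
    unfold tvDist
    have heq : ∀ p : O × Bool,
        |bwdSmoothKer h1 h2 φ ρ C p - bwdSmoothKer h2 h2 φ ρ 1 p|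
          = |C * A p - B p| := by
      intro p; rw [hKA, hKB]
    rw [Finset.sum_congr rfl fun p _ => heq p]
    have hterm : ∀ p : O × Bool, |C * A p - B p| ≤ C * |A p - B p| + |C - 1| * B p := by
      intro p
      have : C * A p - B p = C * (A p - B p) + (C - 1) * B p := by ring
      rw [this]
      calc |C * (A p - B p) + (C - 1) * B p|
          ≤ |C * (A p - B p)| + |(C - 1) * B p| := abs_add_le _ _
        _ = C * |A p - B p| + |C - 1| * B p := by
            rw [abs_mul, abs_mul, abs_of_pos hCpos, abs_of_nonneg (hBnn p)]
    calc (1 / 2 : ℝ) * ∑ p : O × Bool, |C * A p - B p|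
        ≤ (1 / 2 : ℝ) * ∑ p : O × Bool, (C * |A p - B p| + |C - 1| * B p) := by
          apply mul_le_mul_of_nonneg_left (Finset.sum_le_sum fun p _ => hterm p)
          norm_num
      _ = (1 / 2 : ℝ) * (C * (∑ p : O × Bool, |A p - B p|) + |C - 1|) := by
          rw [Finset.sum_add_distrib, ← Finset.mul_sum, ← Finset.mul_sum, hBsum, mul_one]
      _ ≤ C * ∑ p : O × Bool, |A p - B p| := by linarith [hC1]
  -- combine
  have hsum_nn : 0 ≤ ∑ p : O × Bool, |A p - B p| :=
    Finset.sum_nonneg fun p _ => abs_nonneg _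
  calc tvDist (bwdSmoothKer h1 h2 φ ρ C) (bwdSmoothKer h2 h2 φ ρ 1)
      ≤ C * ∑ p : O × Bool, |A p - B p| := hTV
    _ ≤ (M / mh) * (Δ / m) := by
        calc C * ∑ p : O × Bool, |A p - B p| ≤ C * (Δ / m) :=
              mul_le_mul_of_nonneg_left hdiff hCpos.le
          _ ≤ (M / mh) * (Δ / m) :=
              mul_le_mul_of_nonneg_right hCle (by positivity)
    _ = (M / m) * Δ / mh := by
        rw [div_mul_div_comm, div_mul_eq_mul_div, div_div, mul_comm mh m]

/-- **Perturbation bound for the backward smoothing kernel.** -/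
theorem backward_smoothing_kernel_perturbation {d : ℕ} {S A O : Type*}
    [Fintype S] [Fintype A] [Fintype O]
    [Nonempty S] [Nonempty A] [Nonempty O] [DecidableEq O]
    (θ θhat : EuclideanSpace ℝ (Fin d))
    (pib : Bool → S → O → EuclideanSpace ℝ (Fin d) → ℝ)
    (pihi : O → S → EuclideanSpace ℝ (Fin d) → ℝ)
    (pilo : A → S → O → EuclideanSpace ℝ (Fin d) → ℝ)
    (hpib_pos : ∀ ϑ ∈ ({θ, θhat} : Set (EuclideanSpace ℝ (Fin d))),
      ∀ (b : Bool) (s : S) (o : O), 0 < pib b s o ϑ)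
    (hpib_sum : ∀ ϑ ∈ ({θ, θhat} : Set (EuclideanSpace ℝ (Fin d))),
      ∀ (s : S) (o : O), ∑ b, pib b s o ϑ = 1)
    (hpihi_pos : ∀ ϑ ∈ ({θ, θhat} : Set (EuclideanSpace ℝ (Fin d))),
      ∀ (o : O) (s : S), 0 < pihi o s ϑ)
    (hpihi_sum : ∀ ϑ ∈ ({θ, θhat} : Set (EuclideanSpace ℝ (Fin d))),
      ∀ s : S, ∑ o, pihi o s ϑ = 1)
    (hpilo_pos : ∀ ϑ ∈ ({θ, θhat} : Set (EuclideanSpace ℝ (Fin d))),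
      ∀ (a : A) (s : S) (o : O), 0 < pilo a s o ϑ)
    (hpilo_sum : ∀ ϑ ∈ ({θ, θhat} : Set (EuclideanSpace ℝ (Fin d))),
      ∀ (s : S) (o : O), ∑ a, pilo a s o ϑ = 1)
    (ζ : ℝ) (hζ : ζ ∈ Set.Ioo (0 : ℝ) 1)
    (s' : S) (a' : A)
    (φ : O × Bool → ℝ) (hφpos : ∀ p, 0 < φ p) (hφsum : ∑ p, φ p = 1)
    (L : ℝ) (hL : 0 ≤ L)
    (hLip : ∀ (o op : O) (bp : Bool),
      |hFacP pib pihi pilo ζ θhat o s' a' op bp - hFacP pib pihi pilo ζ θ o s' a' op bp|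
        ≤ L * ‖θhat - θ‖)
    (ρ : O × Bool → ℝ) (hρnonneg : ∀ p, 0 ≤ ρ p) (hρsum : ∑ p, ρ p = 1)
    (C : ℝ) (hCpos : 0 < C)
    (hC : ∑ p : O × Bool,
      bwdSmoothKer (fun o op bp => hFacP pib pihi pilo ζ θhat o s' a' op bp)
        (fun o op bp => hFacP pib pihi pilo ζ θ o s' a' op bp) φ ρ C p = 1) :
    tvDist
      (bwdSmoothKer (fun o op bp => hFacP pib pihi pilo ζ θhat o s' a' op bp)
        (fun o op bp => hFacP pib pihi pilo ζ θ o s' a' op bp) φ ρ C)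
      (bwdSmoothKer (fun o op bp => hFacP pib pihi pilo ζ θ o s' a' op bp)
        (fun o op bp => hFacP pib pihi pilo ζ θ o s' a' op bp) φ ρ 1)
    ≤ (univ.sup' univ_nonempty
          (fun z : O × O × Bool => hFacP pib pihi pilo ζ θ z.1 s' a' z.2.1 z.2.2) /
        univ.inf' univ_nonempty
          (fun z : O × O × Bool => hFacP pib pihi pilo ζ θ z.1 s' a' z.2.1 z.2.2)) *
      (L * ‖θhat - θ‖) /
        univ.inf' univ_nonempty
          (fun z : O × O × Bool => hFacP pib pihi pilo ζ θhat z.1 s' a' z.2.1 z.2.2) := by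
  obtain ⟨hζ0, hζ1⟩ := hζ
  have hθmem : θ ∈ ({θ, θhat} : Set (EuclideanSpace ℝ (Fin d))) := Set.mem_insert _ _
  have hθhmem : θhat ∈ ({θ, θhat} : Set (EuclideanSpace ℝ (Fin d))) :=
    Set.mem_insert_of_mem _ rfl
  have hcard : (0 : ℝ) < (Fintype.card O : ℝ) := by exact_mod_cast Fintype.card_pos
  have hbar_pos : ∀ ϑ ∈ ({θ, θhat} : Set (EuclideanSpace ℝ (Fin d))),
      ∀ (o' : O) (o : O) (b : Bool), 0 < pibarHiP pihi ζ o' s' o b ϑ := by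
    intro ϑ hϑ o' o b
    cases b with
    | true => simpa [pibarHiP] using hpihi_pos ϑ hϑ o' s'
    | false =>
      have hz : 0 < ζ / (Fintype.card O : ℝ) := div_pos hζ0 hcard
      by_cases h : o' = o <;> simp [pibarHiP, h] <;> linarith
  have hfac_pos : ∀ ϑ ∈ ({θ, θhat} : Set (EuclideanSpace ℝ (Fin d))),
      ∀ (o op : O) (bp : Bool), 0 < hFacP pib pihi pilo ζ ϑ o s' a' op bp := by
    intro ϑ hϑ o op bp
    exact mul_pos (mul_pos (hpib_pos ϑ hϑ bp s' o) (hbar_pos ϑ hϑ op o bp))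
      (hpilo_pos ϑ hϑ a' s' op)
  set F : O × O × Bool → ℝ := fun z => hFacP pib pihi pilo ζ θ z.1 s' a' z.2.1 z.2.2 with hF
  set G : O × O × Bool → ℝ := fun z => hFacP pib pihi pilo ζ θhat z.1 s' a' z.2.1 z.2.2 with hG
  set m := univ.inf' univ_nonempty F with hm'
  set M := univ.sup' univ_nonempty F with hM'
  set mh := univ.inf' univ_nonempty G with hmh'
  have hm : 0 < m := (Finset.lt_inf'_iff _).mpr fun z _ => hfac_pos θ hθmem z.1 z.2.1 z.2.2
  have hmh : 0 < mh := (Finset.lt_inf'_iff _).mpr fun z _ => hfac_pos θhat hθhmem z.1 z.2.1 z.2.2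
  exact bwd_aux _ _ φ ρ hφpos hφsum hρnonneg hρsum m M mh hm hmh
    (fun o op bp => Finset.inf'_le _ (Finset.mem_univ (o, op, bp)))
    (fun o op bp => Finset.le_sup' _ (Finset.mem_univ (o, op, bp)))
    (fun o op bp => Finset.inf'_le _ (Finset.mem_univ (o, op, bp)))
    (L * ‖θhat - θ‖) (mul_nonneg hL (norm_nonneg _)) hLip C hCpos hC
end

section
/- (Doeblin minorization of the forward smoothing kernel.) Define π̄^F(o,b) := π̄_{o,b}(o,b|s)·π_lo(a|s,o)·ρ(o,b) / Σ_{(o',b')∈O×B} π̄_{o,b}(o',b'|s)·π_lo(a|s,o')·ρ(o',b'). Then π̄^F is a probability mass function on O×B and K(o,b|o⁻,b⁻) ≥ (ε_b²·ζ/|O|)·π̄^F(o,b) for all (o⁻,b⁻), (o,b) ∈ O×B. -/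
open Finset

/-- The forward smoothing kernel
`K(o,b|o⁻,b⁻) = h(o⁻,s,a,o,b)·ρ(o,b) / Σ_{(o',b')} h(o⁻,s,a,o',b')·ρ(o',b')`;
`pm` is the source point `(o⁻,b⁻)` and `p` the target point `(o,b)`. -/
noncomputable def fwdSmoothKernel {S A O : Type*} [Fintype O] [DecidableEq O]
    (pib : Bool → S → O → ℝ) (pihi : O → S → ℝ) (pilo : A → S → O → ℝ) (ζ : ℝ)
    (s : S) (a : A) (ρ : O × Bool → ℝ) (pm p : O × Bool) : ℝ :=
  hFac pib pihi pilo ζ pm.1 s a p.1 p.2 * ρ p /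
    ∑ r : O × Bool, hFac pib pihi pilo ζ pm.1 s a r.1 r.2 * ρ r

/-- **Doeblin minorization of the forward smoothing kernel.** -/
theorem forward_smoothing_kernel_doeblin {S A O : Type*}
    [Fintype S] [Fintype A] [Fintype O]
    [Nonempty S] [Nonempty A] [Nonempty O] [DecidableEq O]
    (pib : Bool → S → O → ℝ) (pihi : O → S → ℝ) (pilo : A → S → O → ℝ)
    (hpib_pos : ∀ b s o, 0 < pib b s o) (hpib_sum : ∀ s o, ∑ b, pib b s o = 1)
    (hpihi_pos : ∀ o s, 0 < pihi o s) (hpihi_sum : ∀ s, ∑ o, pihi o s = 1)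
    (hpilo_pos : ∀ a s o, 0 < pilo a s o) (hpilo_sum : ∀ s o, ∑ a, pilo a s o = 1)
    (ζ : ℝ) (hζ : ζ ∈ Set.Ioo (0 : ℝ) 1)
    (εb : ℝ) (hεb : 0 < εb)
    (pibarOB : O → Bool → S → ℝ)
    (hpibarOB_nonneg : ∀ (o : O) (b : Bool) (s : S), 0 ≤ pibarOB o b s)
    (hpibarOB_sum : ∀ s : S, ∑ p : O × Bool, pibarOB p.1 p.2 s = 1)
    (hsandwich : ∀ (b : Bool) (s : S) (om o : O),
      0 < εb * ζ * pibarOB o b s ∧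
      εb * ζ * pibarOB o b s ≤ pib b s om * pibarHi pihi ζ o s om b ∧
      pib b s om * pibarHi pihi ζ o s om b ≤ εb⁻¹ * (Fintype.card O : ℝ) * pibarOB o b s)
    (s : S) (a : A)
    (ρ : O × Bool → ℝ) (hρpos : ∀ p, 0 < ρ p) (hρsum : ∑ p, ρ p = 1) :
    (∀ p : O × Bool,
      0 ≤ pibarOB p.1 p.2 s * pilo a s p.1 * ρ p /
        ∑ q : O × Bool, pibarOB q.1 q.2 s * pilo a s q.1 * ρ q) ∧
    (∑ p : O × Bool,
      pibarOB p.1 p.2 s * pilo a s p.1 * ρ p /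
        (∑ q : O × Bool, pibarOB q.1 q.2 s * pilo a s q.1 * ρ q) = 1) ∧
    (∀ pm p : O × Bool,
      εb ^ 2 * ζ / (Fintype.card O : ℝ) *
        (pibarOB p.1 p.2 s * pilo a s p.1 * ρ p /
          ∑ q : O × Bool, pibarOB q.1 q.2 s * pilo a s q.1 * ρ q)
        ≤ fwdSmoothKernel pib pihi pilo ζ s a ρ pm p) := by

  obtain ⟨hζ0, hζ1⟩ := hζ
  have hcard : (0:ℝ) < (Fintype.card O : ℝ) := by
    exact_mod_cast Fintype.card_pos
  have hOB_pos : ∀ (o : O) (b : Bool), 0 < pibarOB o b s := by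
    intro o b
    have h1 := (hsandwich b s o o).1
    nlinarith [mul_pos hεb hζ0, hpibarOB_nonneg o b s]
  have hD_pos : 0 < ∑ q : O × Bool, pibarOB q.1 q.2 s * pilo a s q.1 * ρ q := by
    apply Finset.sum_pos
    · intro q _
      exact mul_pos (mul_pos (hOB_pos q.1 q.2) (hpilo_pos a s q.1)) (hρpos q)
    · exact Finset.univ_nonempty
  refine ⟨?_, ?_, ?_⟩
  · intro p
    apply div_nonneg _ hD_pos.le
    exact mul_nonneg (mul_nonneg (hOB_pos p.1 p.2).le (hpilo_pos a s p.1).le) (hρpos p).le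
  · rw [← Finset.sum_div, div_self hD_pos.ne']
  · intro pm p
    have hh_pos : ∀ (om o : O) (b : Bool),
        0 < pib b s om * pibarHi pihi ζ o s om b := fun om o b =>
      lt_of_lt_of_le (hsandwich b s om o).1 (hsandwich b s om o).2.1
    have hM_pos : 0 < ∑ r : O × Bool,
        hFac pib pihi pilo ζ pm.1 s a r.1 r.2 * ρ r := by
      apply Finset.sum_pos
      · intro r _
        exact mul_pos (mul_pos (hh_pos pm.1 r.1 r.2) (hpilo_pos a s r.1)) (hρpos r)
      · exact Finset.univ_nonempty
    have hMle : (∑ r : O × Bool, hFac pib pihi pilo ζ pm.1 s a r.1 r.2 * ρ r)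
        ≤ εb⁻¹ * (Fintype.card O : ℝ) *
          ∑ q : O × Bool, pibarOB q.1 q.2 s * pilo a s q.1 * ρ q := by
      rw [Finset.mul_sum]
      apply Finset.sum_le_sum
      intro r _
      have := (hsandwich r.2 s pm.1 r.1).2.2
      unfold hFac
      have h1 : 0 ≤ pilo a s r.1 * ρ r := mul_nonneg (hpilo_pos a s r.1).le (hρpos r).le
      nlinarith [mul_le_mul_of_nonneg_right this h1]
    have hNge : εb * ζ * pibarOB p.1 p.2 s * pilo a s p.1 * ρ p
        ≤ hFac pib pihi pilo ζ pm.1 s a p.1 p.2 * ρ p := by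
      have := (hsandwich p.2 s pm.1 p.1).2.1
      unfold hFac
      have h1 : 0 ≤ pilo a s p.1 * ρ p := mul_nonneg (hpilo_pos a s p.1).le (hρpos p).le
      nlinarith [mul_le_mul_of_nonneg_right this h1]
    have key : εb ^ 2 * ζ / (Fintype.card O : ℝ) *
        (pibarOB p.1 p.2 s * pilo a s p.1 * ρ p /
          ∑ q : O × Bool, pibarOB q.1 q.2 s * pilo a s q.1 * ρ q)
        = (εb * ζ * pibarOB p.1 p.2 s * pilo a s p.1 * ρ p) /
          (εb⁻¹ * (Fintype.card O : ℝ) *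
            ∑ q : O × Bool, pibarOB q.1 q.2 s * pilo a s q.1 * ρ q) := by
      field_simp
    rw [key]
    unfold fwdSmoothKernel
    calc (εb * ζ * pibarOB p.1 p.2 s * pilo a s p.1 * ρ p) /
          (εb⁻¹ * (Fintype.card O : ℝ) *
            ∑ q : O × Bool, pibarOB q.1 q.2 s * pilo a s q.1 * ρ q)
        ≤ (hFac pib pihi pilo ζ pm.1 s a p.1 p.2 * ρ p) /
          (εb⁻¹ * (Fintype.card O : ℝ) *
            ∑ q : O × Bool, pibarOB q.1 q.2 s * pilo a s q.1 * ρ q) := by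
          apply div_le_div_of_nonneg_right hNge -- maybe wrong name
          positivity
      _ ≤ (hFac pib pihi pilo ζ pm.1 s a p.1 p.2 * ρ p) /
          (∑ r : O × Bool, hFac pib pihi pilo ζ pm.1 s a r.1 r.2 * ρ r) := by
          exact div_le_div_of_nonneg_left
            (mul_nonneg (mul_pos (hh_pos pm.1 p.1 p.2) (hpilo_pos a s p.1)).le (hρpos p).le)
            hM_pos hMle
end

section
/- (Perturbed geometric contraction; the estimate underlying the Smoothing Stability Lemma.) Let t₁ ≤ t₂ be integers, ε₀ ∈ (0,1], Δ ≥ 0. Suppose for each integer t with t₁ < t ≤ t₂ a Markov kernel K_t on X and a probability mass function ν_t on X are given with K_t(y|x) ≥ ε₀·ν_t(y) for all x, y ∈ X. Let (p_t)_{t₁≤t≤t₂} and (q_t)_{t₁≤t≤t₂} be probability mass functions on X such that p_t = p_{t−1}K_t and ‖q_{t−1}K_t − q_t‖_TV ≤ Δ for all t₁ < t ≤ t₂. Then ‖p_{t₂} − q_{t₂}‖_TV ≤ (1 − ε₀)^{t₂−t₁} + Δ/ε₀. -/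
open Finset

lemma tvDist_triangle' {Y : Type*} [Fintype Y] (p q r : Y → ℝ) :
    tvDist p r ≤ tvDist p q + tvDist q r := by
  unfold tvDist
  have h : ∑ y, |p y - r y| ≤ ∑ y, (|p y - q y| + |q y - r y|) := by
    apply Finset.sum_le_sum
    intro y _
    have := abs_sub_le (p y) (q y) (r y)
    linarith
  rw [Finset.sum_add_distrib] at h
  linarith

lemma tvDist_le_one' {Y : Type*} [Fintype Y] (p q : Y → ℝ)
    (hp : ∀ y, 0 ≤ p y) (hq : ∀ y, 0 ≤ q y)
    (hps : ∑ y, p y = 1) (hqs : ∑ y, q y = 1) :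
    tvDist p q ≤ 1 := by
  unfold tvDist
  have h : ∑ y, |p y - q y| ≤ ∑ y, (p y + q y) := by
    apply Finset.sum_le_sum
    intro y _
    have := hp y; have := hq y
    rw [abs_sub_le_iff]; constructor <;> linarith
  rw [Finset.sum_add_distrib, hps, hqs] at h
  linarith

lemma contract' {X : Type*} [Fintype X]
    (ε₀ : ℝ)
    (K : X → X → ℝ) (ν : X → ℝ)
    (hKsum : ∀ x, ∑ y, K x y = 1)
    (hνsum : ∑ y, ν y = 1)
    (hminor : ∀ x y, ε₀ * ν y ≤ K x y)
    (μ μ' : X → ℝ) (hμ : ∑ x, μ x = 1) (hμ' : ∑ x, μ' x = 1) :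
    tvDist (fun y => ∑ x, μ x * K x y) (fun y => ∑ x, μ' x * K x y)
      ≤ (1 - ε₀) * tvDist μ μ' := by
  unfold tvDist
  have h1 : ∀ y, (∑ x, μ x * K x y) - (∑ x, μ' x * K x y)
      = ∑ x, (μ x - μ' x) * (K x y - ε₀ * ν y) := by
    intro y
    have h0 : ∑ x, (μ x - μ' x) = 0 := by
      rw [Finset.sum_sub_distrib, hμ, hμ']; ring
    have expand : ∑ x, (μ x - μ' x) * (K x y - ε₀ * ν y)
        = (∑ x, (μ x * K x y - μ' x * K x y))
          - (∑ x, (μ x - μ' x)) * (ε₀ * ν y) := by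
      rw [Finset.sum_mul, ← Finset.sum_sub_distrib]
      apply Finset.sum_congr rfl
      intro x _; ring
    rw [expand, h0, Finset.sum_sub_distrib]
    ring
  have h2 : ∑ y, |(∑ x, μ x * K x y) - (∑ x, μ' x * K x y)|
      ≤ (1 - ε₀) * ∑ x, |μ x - μ' x| := by
    calc ∑ y, |(∑ x, μ x * K x y) - (∑ x, μ' x * K x y)|
        = ∑ y, |∑ x, (μ x - μ' x) * (K x y - ε₀ * ν y)| := by
          apply Finset.sum_congr rfl; intro y _; rw [h1]
      _ ≤ ∑ y, ∑ x, |μ x - μ' x| * (K x y - ε₀ * ν y) := by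
          apply Finset.sum_le_sum; intro y _
          refine (Finset.abs_sum_le_sum_abs _ _).trans ?_
          apply Finset.sum_le_sum; intro x _
          rw [abs_mul, abs_of_nonneg (show (0:ℝ) ≤ K x y - ε₀ * ν y by
            linarith [hminor x y])]
      _ = ∑ x, |μ x - μ' x| * ∑ y, (K x y - ε₀ * ν y) := by
          rw [Finset.sum_comm]
          apply Finset.sum_congr rfl
          intro x _
          rw [Finset.mul_sum]
      _ = ∑ x, |μ x - μ' x| * (1 - ε₀) := by
          apply Finset.sum_congr rfl
          intro x _
          rw [Finset.sum_sub_distrib, hKsum, ← Finset.mul_sum, hνsum, mul_one]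
      _ = (1 - ε₀) * ∑ x, |μ x - μ' x| := by
          rw [← Finset.sum_mul]; ring
  linarith

/-- **Perturbed geometric contraction** (the estimate underlying the Smoothing
Stability Lemma).  `K t x y` denotes the transition probability `K_t(y|x)`. -/
theorem perturbed_geometric_contraction {X : Type*} [Fintype X] [Nonempty X]
    (t₁ t₂ : ℤ) (ht : t₁ ≤ t₂)
    (ε₀ : ℝ) (hε₀0 : 0 < ε₀) (hε₀1 : ε₀ ≤ 1)
    (Δ : ℝ) (hΔ : 0 ≤ Δ)
    (K : ℤ → X → X → ℝ) (ν : ℤ → X → ℝ)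
    (hKnonneg : ∀ t : ℤ, t₁ < t → t ≤ t₂ → ∀ x y, 0 ≤ K t x y)
    (hKsum : ∀ t : ℤ, t₁ < t → t ≤ t₂ → ∀ x, ∑ y, K t x y = 1)
    (hνnonneg : ∀ t : ℤ, t₁ < t → t ≤ t₂ → ∀ y, 0 ≤ ν t y)
    (hνsum : ∀ t : ℤ, t₁ < t → t ≤ t₂ → ∑ y, ν t y = 1)
    (hminor : ∀ t : ℤ, t₁ < t → t ≤ t₂ → ∀ x y, ε₀ * ν t y ≤ K t x y)
    (p q : ℤ → X → ℝ)
    (hpnonneg : ∀ t : ℤ, t₁ ≤ t → t ≤ t₂ → ∀ x, 0 ≤ p t x)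
    (hpsum : ∀ t : ℤ, t₁ ≤ t → t ≤ t₂ → ∑ x, p t x = 1)
    (hqnonneg : ∀ t : ℤ, t₁ ≤ t → t ≤ t₂ → ∀ x, 0 ≤ q t x)
    (hqsum : ∀ t : ℤ, t₁ ≤ t → t ≤ t₂ → ∑ x, q t x = 1)
    (hprec : ∀ t : ℤ, t₁ < t → t ≤ t₂ → ∀ y, p t y = ∑ x, p (t - 1) x * K t x y)
    (hqrec : ∀ t : ℤ, t₁ < t → t ≤ t₂ →
      tvDist (fun y => ∑ x, q (t - 1) x * K t x y) (q t) ≤ Δ) :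
    tvDist (p t₂) (q t₂) ≤ (1 - ε₀) ^ (t₂ - t₁).toNat + Δ / ε₀ := by
  have hΔε : 0 ≤ Δ / ε₀ := div_nonneg hΔ hε₀0.le
  have key : ∀ n : ℕ, ∀ t : ℤ, t = t₁ + n → t ≤ t₂ →
      tvDist (p t) (q t) ≤ (1 - ε₀) ^ n + Δ / ε₀ := by
    intro n
    induction n with
    | zero =>
      intro t ht' hle
      have h1 := tvDist_le_one' (p t) (q t) (hpnonneg t (by omega) hle)
        (hqnonneg t (by omega) hle) (hpsum t (by omega) hle) (hqsum t (by omega) hle)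
      simpa using h1.trans (by linarith)
    | succ n ih =>
      intro t ht' hle
      have ht1 : t₁ < t := by omega
      have hprev := ih (t - 1) (by push_cast; omega) (by omega)
      have hpt : p t = fun y => ∑ x, p (t - 1) x * K t x y := by
        funext y; exact hprec t ht1 hle y
      have hcon := contract' ε₀ (K t) (ν t) (hKsum t ht1 hle) (hνsum t ht1 hle)
        (hminor t ht1 hle) (p (t - 1)) (q (t - 1))
        (hpsum (t - 1) (by omega) (by omega)) (hqsum (t - 1) (by omega) (by omega))
      have htri := tvDist_triangle' (p t) (fun y => ∑ x, q (t - 1) x * K t x y) (q t)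
      rw [hpt] at htri
      have hq := hqrec t ht1 hle
      have hgeom : (1 - ε₀) * (Δ / ε₀) + Δ = Δ / ε₀ := by
        field_simp
        ring
      have h1ε : 0 ≤ 1 - ε₀ := by linarith
      have := mul_le_mul_of_nonneg_left hprev h1ε
      calc tvDist (p t) (q t)
          ≤ (1 - ε₀) * tvDist (p (t - 1)) (q (t - 1)) + Δ := by
            rw [hpt]; linarith
        _ ≤ (1 - ε₀) * ((1 - ε₀) ^ n + Δ / ε₀) + Δ := by linarith
        _ = (1 - ε₀) ^ (n + 1) + Δ / ε₀ := by
            linear_combination hgeom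
  exact key (t₂ - t₁).toNat t₂ (by omega) le_rfl
end

section
/- (Two-step positivity of the chain induced by an options-with-failure policy; irreducibility step of Proposition 1.) For all x, x' ∈ X := S×A×O×B, the two-step kernel satisfies Q²(x'|x) := Σ_{x''∈X} Q(x''|x)·Q(x'|x'') > 0. -/
open Finset

/-- The Markov kernel `Q((s',a',o',b')|(s,a,o,b))` on `X = S × A × O × B`
induced by an options-with-failure policy; `P s' s a` denotes `P(s'|s,a)`. -/
noncomputable def optionsKernel {S A O : Type*} [Fintype O] [DecidableEq O]
    (P : S → S → A → ℝ)
    (pib : Bool → S → O → ℝ) (pihi : O → S → ℝ) (pilo : A → S → O → ℝ) (ζ : ℝ)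
    (x x' : S × A × O × Bool) : ℝ :=
  P x'.1 x.1 x.2.1 * pib x'.2.2.2 x'.1 x.2.2.1 *
    pibarHi pihi ζ x'.2.2.1 x'.1 x.2.2.1 x'.2.2.2 * pilo x'.2.1 x'.1 x'.2.2.1

/-- **Two-step positivity of the chain induced by an options-with-failure policy**
(irreducibility step of Proposition 1). -/
theorem two_step_positivity {S A O : Type*}
    [Fintype S] [Fintype A] [Fintype O]
    [Nonempty S] [Nonempty A] [Nonempty O] [DecidableEq O]
    (pib : Bool → S → O → ℝ) (pihi : O → S → ℝ) (pilo : A → S → O → ℝ)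
    (hpib_pos : ∀ b s o, 0 < pib b s o) (hpib_sum : ∀ s o, ∑ b, pib b s o = 1)
    (hpihi_pos : ∀ o s, 0 < pihi o s) (hpihi_sum : ∀ s, ∑ o, pihi o s = 1)
    (hpilo_pos : ∀ a s o, 0 < pilo a s o) (hpilo_sum : ∀ s o, ∑ a, pilo a s o = 1)
    (ζ : ℝ) (hζ : ζ ∈ Set.Ioo (0 : ℝ) 1)
    (P : S → S → A → ℝ)
    (hPnonneg : ∀ s' s a, 0 ≤ P s' s a) (hPsum : ∀ s a, ∑ s', P s' s a = 1)
    (hreach : ∀ s s' : S, ∃ a : A, 0 < P s' s a) :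
    ∀ x x' : S × A × O × Bool,
      0 < ∑ x'' : S × A × O × Bool,
        optionsKernel P pib pihi pilo ζ x x'' * optionsKernel P pib pihi pilo ζ x'' x' := by

  intro x x'
  obtain ⟨hζ0, hζ1⟩ := hζ
  have hcard : (0:ℝ) < (Fintype.card O : ℝ) := by
    exact_mod_cast Fintype.card_pos
  have hbar_pos : ∀ (o' : O) (s : S) (o : O) (b : Bool), 0 < pibarHi pihi ζ o' s o b := by
    intro o' s o b
    unfold pibarHi
    have hdiv : 0 < ζ / (Fintype.card O : ℝ) := div_pos hζ0 hcard
    split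
    · exact hpihi_pos _ _
    · split
      · linarith
      · exact hdiv
  have hK_nonneg : ∀ y z : S × A × O × Bool, 0 ≤ optionsKernel P pib pihi pilo ζ y z := by
    intro y z
    exact mul_nonneg (mul_nonneg (mul_nonneg (hPnonneg _ _ _) (hpib_pos _ _ _).le)
      (hbar_pos _ _ _ _).le) (hpilo_pos _ _ _).le
  have hs'' : ∃ s'' : S, 0 < P s'' x.1 x.2.1 := by
    by_contra h
    push_neg at h
    have : ∑ s'', P s'' x.1 x.2.1 ≤ 0 :=
      Finset.sum_nonpos fun s'' _ => h s''
    rw [hPsum] at this; linarith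
  obtain ⟨s'', hs''⟩ := hs''
  obtain ⟨a'', ha''⟩ := hreach s'' x'.1
  set y : S × A × O × Bool := (s'', a'', Classical.arbitrary O, true) with hy
  apply Finset.sum_pos' (fun z _ => mul_nonneg (hK_nonneg _ _) (hK_nonneg _ _))
  refine ⟨y, Finset.mem_univ _, ?_⟩
  have h1 : 0 < optionsKernel P pib pihi pilo ζ x y :=
    mul_pos (mul_pos (mul_pos hs'' (hpib_pos _ _ _)) (hbar_pos _ _ _ _)) (hpilo_pos _ _ _)
  have h2 : 0 < optionsKernel P pib pihi pilo ζ y x' :=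
    mul_pos (mul_pos (mul_pos ha'' (hpib_pos _ _ _)) (hbar_pos _ _ _ _)) (hpilo_pos _ _ _)
  exact mul_pos h1 h2
end

section
/- (Contraction of the population EM operator; Theorem 4, part 2.) Assume: (i) strong concavity: Q̄(θ₁|θ*) − Q̄(θ₂|θ*) − ⟨∇Q̄(θ₂|θ*), θ₁ − θ₂⟩ ≤ −(λ/2)·‖θ₁ − θ₂‖₂² for all θ₁, θ₂ ∈ Θ; (ii) for every θ ∈ Θ_r, M̄(θ) maximizes θ' ↦ Q̄(θ'|θ) over Θ; (iii) self-consistency: θ* maximizes θ' ↦ Q̄(θ'|θ*) over Θ; (iv) first-order stability: ‖∇Q̄(M̄(θ)|θ) − ∇Q̄(M̄(θ)|θ*)‖₂ ≤ γ·‖θ − θ*‖₂ for all θ ∈ Θ_r. Then for all θ ∈ Θ_r: ‖M̄(θ) − θ*‖₂ ≤ (γ/λ)·‖θ − θ*‖₂. -/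
open RealInnerProductSpace

private lemma max_grad_inner_nonpos {E : Type*} [NormedAddCommGroup E] [InnerProductSpace ℝ E] [CompleteSpace E]
    {s : Set E} (hs : Convex ℝ s) {f : E → ℝ} {g x u : E}
    (hx : x ∈ s) (hu : u ∈ s) (hf : HasGradientAt f g x)
    (hmax : ∀ y ∈ s, f y ≤ f x) : ⟪g, u - x⟫ ≤ 0 := by
  have hy : u - x ∈ posTangentConeAt s x :=
    sub_mem_posTangentConeAt_of_segment_subset (hs.segment_subset hx hu)
  have hloc : IsLocalMaxOn f s x := (isMaxOn_iff.mpr hmax).localize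
  have := hloc.hasFDerivWithinAt_nonpos (hf.hasFDerivAt.hasFDerivWithinAt) hy
  simpa using this

/-- **Contraction of the population EM operator (Theorem 4, part 2).**
`Qbar θ' θ` denotes `Q̄(θ'|θ)` and `g θ' θ` denotes its gradient in the first
argument, evaluated at `θ'`. -/
theorem population_em_contraction {d : ℕ}
    (Θ Θtilde : Set (EuclideanSpace ℝ (Fin d)))
    (hΘconv : Convex ℝ Θ) (hΘcomp : IsCompact Θ)
    (hΘtopen : IsOpen Θtilde) (hΘsub : Θ ⊆ Θtilde)
    (θstar : EuclideanSpace ℝ (Fin d)) (hθstar : θstar ∈ Θ)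
    (r : ℝ) (hr : 0 < r)
    (Qbar : EuclideanSpace ℝ (Fin d) → EuclideanSpace ℝ (Fin d) → ℝ)
    (g : EuclideanSpace ℝ (Fin d) → EuclideanSpace ℝ (Fin d) → EuclideanSpace ℝ (Fin d))
    (hgrad : ∀ θ ∈ Θ, ‖θ - θstar‖ ≤ r → ∀ θ' ∈ Θtilde,
      HasGradientAt (fun x => Qbar x θ) (g θ' θ) θ')
    (lam γ : ℝ) (hlam : 0 < lam) (hγ : 0 ≤ γ)
    (Mbar : EuclideanSpace ℝ (Fin d) → EuclideanSpace ℝ (Fin d))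
    (hconc : ∀ θ₁ ∈ Θ, ∀ θ₂ ∈ Θ,
      Qbar θ₁ θstar - Qbar θ₂ θstar - ⟪g θ₂ θstar, θ₁ - θ₂⟫
        ≤ -(lam / 2) * ‖θ₁ - θ₂‖ ^ 2)
    (hMmem : ∀ θ ∈ Θ, ‖θ - θstar‖ ≤ r → Mbar θ ∈ Θ)
    (hMmax : ∀ θ ∈ Θ, ‖θ - θstar‖ ≤ r → ∀ θ' ∈ Θ, Qbar θ' θ ≤ Qbar (Mbar θ) θ)
    (hself : ∀ θ' ∈ Θ, Qbar θ' θstar ≤ Qbar θstar θstar)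
    (hfos : ∀ θ ∈ Θ, ‖θ - θstar‖ ≤ r →
      ‖g (Mbar θ) θ - g (Mbar θ) θstar‖ ≤ γ * ‖θ - θstar‖) :
    ∀ θ ∈ Θ, ‖θ - θstar‖ ≤ r → ‖Mbar θ - θstar‖ ≤ (γ / lam) * ‖θ - θstar‖ := by
  intro θ hθ hθr
  set M := Mbar θ with hMdef
  have hM : M ∈ Θ := hMmem θ hθ hθr
  have hrs : ‖θstar - θstar‖ ≤ r := by simp [hr.le]
  have hg2 : HasGradientAt (fun x => Qbar x θstar) (g θstar θstar) θstar :=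
    hgrad θstar hθstar hrs θstar (hΘsub hθstar)
  have hg3 : HasGradientAt (fun x => Qbar x θ) (g M θ) M := hgrad θ hθ hθr M (hΘsub hM)
  have foc1 : ⟪g θstar θstar, M - θstar⟫ ≤ 0 :=
    max_grad_inner_nonpos hΘconv hθstar hM hg2 hself
  have foc2 : ⟪g M θ, θstar - M⟫ ≤ 0 :=
    max_grad_inner_nonpos hΘconv hM hθstar hg3 (hMmax θ hθ hθr)
  have h1 := hconc θstar hθstar M hM
  have h2 := hconc M hM θstar hθstar
  rw [norm_sub_rev] at h1
  have hcs : ⟪g M θstar, θstar - M⟫ - ⟪g M θ, θstar - M⟫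
      ≤ γ * ‖θ - θstar‖ * ‖M - θstar‖ := by
    rw [← inner_sub_left]
    calc ⟪g M θstar - g M θ, θstar - M⟫ ≤ ‖g M θstar - g M θ‖ * ‖θstar - M‖ :=
          real_inner_le_norm _ _
      _ = ‖g M θ - g M θstar‖ * ‖M - θstar‖ := by rw [norm_sub_rev, norm_sub_rev θstar]
      _ ≤ γ * ‖θ - θstar‖ * ‖M - θstar‖ :=
          mul_le_mul_of_nonneg_right (hfos θ hθ hθr) (norm_nonneg _)
  have key : lam * ‖M - θstar‖ ^ 2 ≤ γ * ‖θ - θstar‖ * ‖M - θstar‖ := by linarith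
  rcases eq_or_lt_of_le (norm_nonneg (M - θstar)) with hn | hn
  · rw [← hn]
    positivity
  · rw [div_mul_eq_mul_div, le_div_iff₀ hlam]
    nlinarith [key]
end

section
/- (Finite-sample EM error recursion; Theorem 5, part 2.) Suppose ‖M̄(θ) − θ*‖₂ ≤ κ·‖θ − θ*‖₂ and ‖M(θ) − M̄(θ)‖₂ ≤ Δ for all θ ∈ Θ_r. Let θ⁽⁰⁾ ∈ Θ_r and define θ⁽ⁿ⁾ := M(θ⁽ⁿ⁻¹⁾) for n ≥ 1. Then for all n ≥ 0: θ⁽ⁿ⁾ ∈ Θ_r and ‖θ⁽ⁿ⁾ − θ*‖₂ ≤ κⁿ·‖θ⁽⁰⁾ − θ*‖₂ + (1 − κ)⁻¹·Δ. -/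
/-- **Finite-sample EM error recursion (Theorem 5, part 2).**
`Mbar` is the population EM update, `M` the finite-sample EM update; both are
only used on `Θ_r = {θ ∈ Θ : ‖θ - θ*‖ ≤ r}`. -/
theorem em_error_recursion {d : ℕ}
    (Θ : Set (EuclideanSpace ℝ (Fin d)))
    (θstar : EuclideanSpace ℝ (Fin d)) (hθstar : θstar ∈ Θ)
    (r : ℝ) (hr : 0 < r)
    (κ : ℝ) (hκ : κ ∈ Set.Ioo (0 : ℝ) 1)
    (Δ : ℝ) (hΔ : Δ ∈ Set.Ioc (0 : ℝ) ((1 - κ) * r))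
    (Mbar M : EuclideanSpace ℝ (Fin d) → EuclideanSpace ℝ (Fin d))
    (hMmem : ∀ θ ∈ Θ, ‖θ - θstar‖ ≤ r → M θ ∈ Θ)
    (hMbar : ∀ θ ∈ Θ, ‖θ - θstar‖ ≤ r → ‖Mbar θ - θstar‖ ≤ κ * ‖θ - θstar‖)
    (hMclose : ∀ θ ∈ Θ, ‖θ - θstar‖ ≤ r → ‖M θ - Mbar θ‖ ≤ Δ)
    (θseq : ℕ → EuclideanSpace ℝ (Fin d))
    (hθ0mem : θseq 0 ∈ Θ) (hθ0r : ‖θseq 0 - θstar‖ ≤ r)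
    (hrec : ∀ n : ℕ, θseq (n + 1) = M (θseq n)) :
    ∀ n : ℕ, (θseq n ∈ Θ ∧ ‖θseq n - θstar‖ ≤ r) ∧
      ‖θseq n - θstar‖ ≤ κ ^ n * ‖θseq 0 - θstar‖ + (1 - κ)⁻¹ * Δ := by
  obtain ⟨hκ0, hκ1⟩ := hκ
  obtain ⟨hΔ0, hΔr⟩ := hΔ
  have h1κ : (0:ℝ) < 1 - κ := by linarith
  have hΔκr : (1 - κ)⁻¹ * Δ ≤ r := by
    rw [inv_mul_le_iff₀ h1κ]
    linarith [hΔr]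
  -- strengthened invariant
  have key : ∀ n : ℕ, θseq n ∈ Θ ∧
      ‖θseq n - θstar‖ ≤ κ ^ n * ‖θseq 0 - θstar‖ + Δ * (1 - κ ^ n) / (1 - κ) := by
    intro n
    induction n with
    | zero => simpa using hθ0mem
    | succ n ih =>
      obtain ⟨hmem, hbound⟩ := ih
      have hκn1 : κ ^ n ≤ 1 := pow_le_one₀ (le_of_lt hκ0) (le_of_lt hκ1)
      have hκn0 : (0:ℝ) ≤ κ ^ n := pow_nonneg (le_of_lt hκ0) n
      have hΔterm : Δ * (1 - κ ^ n) / (1 - κ) ≤ (1 - κ ^ n) * r := by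
        rw [div_le_iff₀ h1κ]
        nlinarith
      have hrbound : ‖θseq n - θstar‖ ≤ r := by
        calc ‖θseq n - θstar‖ ≤ κ ^ n * ‖θseq 0 - θstar‖ + Δ * (1 - κ ^ n) / (1 - κ) := hbound
        _ ≤ κ ^ n * r + (1 - κ ^ n) * r := by
            have := mul_le_mul_of_nonneg_left hθ0r hκn0
            linarith
        _ = r := by ring
      refine ⟨hrec n ▸ hMmem _ hmem hrbound, ?_⟩
      have h2 : ‖θseq (n+1) - θstar‖ ≤ Δ + κ * ‖θseq n - θstar‖ := by
        calc ‖θseq (n+1) - θstar‖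
            = ‖(M (θseq n) - Mbar (θseq n)) + (Mbar (θseq n) - θstar)‖ := by
              rw [hrec n]; congr 1; abel
        _ ≤ ‖M (θseq n) - Mbar (θseq n)‖ + ‖Mbar (θseq n) - θstar‖ := norm_add_le _ _
        _ ≤ Δ + κ * ‖θseq n - θstar‖ := by
            exact add_le_add (hMclose _ hmem hrbound) (hMbar _ hmem hrbound)
      calc ‖θseq (n+1) - θstar‖ ≤ Δ + κ * ‖θseq n - θstar‖ := h2
      _ ≤ Δ + κ * (κ ^ n * ‖θseq 0 - θstar‖ + Δ * (1 - κ ^ n) / (1 - κ)) := by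
          have := mul_le_mul_of_nonneg_left hbound (le_of_lt hκ0)
          linarith
      _ = κ ^ (n+1) * ‖θseq 0 - θstar‖ + Δ * (1 - κ ^ (n+1)) / (1 - κ) := by
          field_simp
          ring
  intro n
  obtain ⟨hmem, hbound⟩ := key n
  have hκn1 : κ ^ n ≤ 1 := pow_le_one₀ (le_of_lt hκ0) (le_of_lt hκ1)
  have hκn0 : (0:ℝ) ≤ κ ^ n := pow_nonneg (le_of_lt hκ0) n
  have hΔterm : Δ * (1 - κ ^ n) / (1 - κ) ≤ (1 - κ)⁻¹ * Δ := by
    rw [div_le_iff₀ h1κ, inv_mul_eq_div, div_mul_eq_mul_div, le_div_iff₀ h1κ]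
    nlinarith [mul_nonneg (mul_nonneg hΔ0.le hκn0) h1κ.le]
  have hweak : ‖θseq n - θstar‖ ≤ κ ^ n * ‖θseq 0 - θstar‖ + (1 - κ)⁻¹ * Δ := by
    linarith
  have hrb : ‖θseq n - θstar‖ ≤ r := by
    have hΔterm2 : Δ * (1 - κ ^ n) / (1 - κ) ≤ (1 - κ ^ n) * r := by
      rw [div_le_iff₀ h1κ]; nlinarith
    have := mul_le_mul_of_nonneg_left hθ0r hκn0
    nlinarith
  exact ⟨⟨hmem, hrb⟩, hweak⟩
end
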